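/- arXiv:1008.3043 — 6 statements merged into one kernel-verified Lean document; each statement's English description precedes it below -/
import Mathlib

section
/- Let d, k be positive integers with k ≤ d, let ε̄ > 0, and let f : B_{ℝ^d}(1+ε̄) → ℝ satisfy f(x) = g(Ax) = g̃(Ãx) for all x ∈ B_{ℝ^d}(1+ε̄), where A and Ã are k×d real matrices with AA^T = I_k = ÃÃ^T and g, g̃ are continuously differentiable on their domains. If the matrix H^f := ∫_{S^{d−1}} ∇f(x)∇f(x)^T dμ_{S^{d−1}}(x) has rank k, then there exists a k×k orthogonal matrix 𝒪 (𝒪𝒪^T = I_k = 𝒪^T𝒪) such that Ã = 𝒪A. -/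
open MeasureTheory Matrix

section Aux

variable {d k : ℕ}

private lemma aux_dot_sq (m : ℕ) (v : Fin m → ℝ) : ∑ i, v i ^ 2 = v ⬝ᵥ v := by
  simp [dotProduct, sq]

private lemma aux_contract (A : Matrix (Fin k) (Fin d) ℝ) (hA : A * Aᵀ = 1) (x : Fin d → ℝ) :
    ∑ i, (A.mulVec x) i ^ 2 ≤ ∑ i, x i ^ 2 := by
  rw [aux_dot_sq, aux_dot_sq]
  have hsym : (Aᵀ * A)ᵀ = Aᵀ * A := by simp [Matrix.transpose_mul]
  have e1 : A.mulVec x ⬝ᵥ A.mulVec x = ((Aᵀ * A).mulVec x) ⬝ᵥ x := by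
    rw [Matrix.dotProduct_mulVec]
    congr 1
    rw [Matrix.vecMul_mulVec, ← Matrix.mulVec_transpose, hsym]
  set Q : Matrix (Fin d) (Fin d) ℝ := 1 - Aᵀ * A with hQ
  have hQQ : Q * Q = Q := by
    simp only [hQ, Matrix.sub_mul, Matrix.mul_sub, Matrix.one_mul, Matrix.mul_one]
    rw [Matrix.mul_assoc, ← Matrix.mul_assoc A, hA, Matrix.one_mul]
    abel
  have hQT : Qᵀ = Q := by
    simp [hQ, Matrix.transpose_sub, Matrix.transpose_mul]
  have e2 : (Q.mulVec x) ⬝ᵥ (Q.mulVec x) = (Q.mulVec x) ⬝ᵥ x := by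
    rw [Matrix.dotProduct_mulVec, Matrix.vecMul_mulVec, hQT, hQQ,
      ← Matrix.vecMul_transpose, hQT]
  have e3 : (0:ℝ) ≤ (Q.mulVec x) ⬝ᵥ (Q.mulVec x) := by
    rw [← aux_dot_sq]
    exact Finset.sum_nonneg fun i _ => sq_nonneg _
  have e4 : (Q.mulVec x) ⬝ᵥ x = x ⬝ᵥ x - ((Aᵀ * A).mulVec x) ⬝ᵥ x := by
    simp [hQ, Matrix.sub_mulVec, sub_dotProduct]
  rw [e1]
  rw [e2, e4] at e3
  linarith

end Aux


section Aux2
variable {d k : ℕ}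

private lemma aux_dot_sq' (m : ℕ) (v : Fin m → ℝ) : ∑ i, v i ^ 2 = v ⬝ᵥ v := by
  simp [dotProduct, sq]

private lemma aux_open (m : ℕ) (c : ℝ) :
    IsOpen {z : Fin m → ℝ | ∑ i, z i ^ 2 < c} :=
  isOpen_lt (by fun_prop) continuous_const

private lemma aux_fderiv (εb : ℝ) (hεb : 0 < εb)
    (f : (Fin d → ℝ) → ℝ) (A : Matrix (Fin k) (Fin d) ℝ)
    (hcontract : ∀ x : Fin d → ℝ, ∑ i, (A.mulVec x) i ^ 2 ≤ ∑ i, x i ^ 2)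
    (g : (Fin k → ℝ) → ℝ)
    (hg : ContDiffOn ℝ 1 g {y : Fin k → ℝ | ∑ i, y i ^ 2 ≤ (1 + εb) ^ 2})
    (hfg : ∀ x : Fin d → ℝ, ∑ i, x i ^ 2 ≤ (1 + εb) ^ 2 → f x = g (A.mulVec x))
    (x : Fin d → ℝ) (hx : ∑ i, x i ^ 2 < (1 + εb) ^ 2) :
    fderiv ℝ f x = (fderiv ℝ g (A.mulVec x)).comp
      (LinearMap.toContinuousLinearMap A.mulVecLin) := by
  set L := LinearMap.toContinuousLinearMap A.mulVecLin with hL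
  have hLapp : ∀ v, L v = A.mulVec v := fun v => rfl
  have hfe : f =ᶠ[nhds x] (g ∘ A.mulVec) := by
    filter_upwards [(aux_open d ((1+εb)^2)).mem_nhds hx] with z hz
    exact hfg z (le_of_lt hz)
  have hgd : DifferentiableAt ℝ g (A.mulVec x) := by
    have hlt : ∑ i, (A.mulVec x) i ^ 2 < (1 + εb) ^ 2 := lt_of_le_of_lt (hcontract x) hx
    have hmem : {y : Fin k → ℝ | ∑ i, y i ^ 2 ≤ (1 + εb) ^ 2} ∈ nhds (A.mulVec x) :=
      by
      refine Filter.mem_of_superset ((aux_open k ((1+εb)^2)).mem_nhds hlt) ?_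
      intro y hy
      simp only [Set.mem_setOf_eq] at hy ⊢
      exact le_of_lt hy
    exact (hg.differentiableOn one_ne_zero).differentiableAt hmem
  have hcoe : (⇑L : (Fin d → ℝ) → (Fin k → ℝ)) = A.mulVec := rfl
  have hLd : DifferentiableAt ℝ A.mulVec x := hcoe ▸ L.differentiableAt
  have hfd : fderiv ℝ A.mulVec x = L := by rw [← hcoe]; exact L.fderiv
  rw [hfe.fderiv_eq, fderiv_comp (𝕜 := ℝ) x hgd hLd, hfd]

end Aux2

section Aux3
variable {d k : ℕ}

private lemma aux_sphere_compact (d : ℕ) : IsCompact {x : Fin d → ℝ | ∑ i, x i ^ 2 = 1} := by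
  apply Metric.isCompact_of_isClosed_isBounded
  · exact isClosed_eq (by fun_prop) continuous_const
  · rw [isBounded_iff_forall_norm_le]
    refine ⟨1, fun x hx => ?_⟩
    simp only [Set.mem_setOf_eq] at hx
    rw [pi_norm_le_iff_of_nonneg zero_le_one]
    intro i
    have h1 : x i ^ 2 ≤ 1 := by
      rw [← hx]
      exact Finset.single_le_sum (fun j _ => sq_nonneg (x j)) (Finset.mem_univ i)
    rw [Real.norm_eq_abs]
    nlinarith [abs_nonneg (x i), sq_abs (x i)]

private lemma aux_bound (εb : ℝ) (hεb : 0 < εb)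
    (f : (Fin d → ℝ) → ℝ) (A : Matrix (Fin k) (Fin d) ℝ)
    (hcontract : ∀ x : Fin d → ℝ, ∑ i, (A.mulVec x) i ^ 2 ≤ ∑ i, x i ^ 2)
    (g : (Fin k → ℝ) → ℝ)
    (hg : ContDiffOn ℝ 1 g {y : Fin k → ℝ | ∑ i, y i ^ 2 ≤ (1 + εb) ^ 2})
    (hfg : ∀ x : Fin d → ℝ, ∑ i, x i ^ 2 ≤ (1 + εb) ^ 2 → f x = g (A.mulVec x)) :
    ∃ C : ℝ, 0 ≤ C ∧ ∀ x : Fin d → ℝ, ∑ i, x i ^ 2 = 1 →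
      ∀ v : Fin d → ℝ, |fderiv ℝ f x v| ≤ C * ‖v‖ := by
  set L := LinearMap.toContinuousLinearMap A.mulVecLin with hLdef
  have hone : (1:ℝ) < (1 + εb) ^ 2 := by nlinarith
  have hcont : ContinuousOn (fun x : Fin d → ℝ => fderiv ℝ g (A.mulVec x))
      {x : Fin d → ℝ | ∑ i, x i ^ 2 = 1} := by
    have hsub : {y : Fin k → ℝ | ∑ i, y i ^ 2 < (1 + εb) ^ 2} ⊆
        {y : Fin k → ℝ | ∑ i, y i ^ 2 ≤ (1 + εb) ^ 2} := by
      intro y hy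
      simp only [Set.mem_setOf_eq] at hy ⊢
      exact le_of_lt hy
    have h1 : ContinuousOn (fderiv ℝ g) {y : Fin k → ℝ | ∑ i, y i ^ 2 < (1 + εb) ^ 2} :=
      (hg.mono hsub).continuousOn_fderiv_of_isOpen (aux_open k ((1+εb)^2)) le_rfl
    refine h1.comp (Continuous.continuousOn ?_) ?_
    · show Continuous (A.mulVec)
      exact L.continuous
    · intro x hx
      simp only [Set.mem_setOf_eq] at hx ⊢
      calc ∑ i, (A.mulVec x) i ^ 2 ≤ ∑ i, x i ^ 2 := hcontract x
        _ < (1 + εb) ^ 2 := by rw [hx]; exact hone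
  obtain ⟨C, hC⟩ := (aux_sphere_compact d).exists_bound_of_continuousOn hcont
  refine ⟨max C 0 * ‖L‖, mul_nonneg (le_max_right C 0) (norm_nonneg L), fun x hx v => ?_⟩
  have hx' : ∑ i, x i ^ 2 < (1 + εb) ^ 2 := by rw [hx]; exact hone
  rw [aux_fderiv εb hεb f A hcontract g hg hfg x hx']
  have h2 : |fderiv ℝ g (A.mulVec x) (L v)| ≤ ‖fderiv ℝ g (A.mulVec x)‖ * ‖L v‖ := by
    rw [← Real.norm_eq_abs]
    exact (fderiv ℝ g (A.mulVec x)).le_opNorm (L v)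
  have h3 : ‖fderiv ℝ g (A.mulVec x)‖ ≤ max C 0 := le_trans (hC x hx) (le_max_left C 0)
  have h4 : ‖L v‖ ≤ ‖L‖ * ‖v‖ := L.le_opNorm v
  have h5 : (fderiv ℝ g (A.mulVec x)).comp L v = fderiv ℝ g (A.mulVec x) (L v) := rfl
  rw [h5]
  calc |fderiv ℝ g (A.mulVec x) (L v)| ≤ ‖fderiv ℝ g (A.mulVec x)‖ * ‖L v‖ := h2
    _ ≤ max C 0 * (‖L‖ * ‖v‖) := by
        apply mul_le_mul h3 h4 (norm_nonneg _) (le_max_right C 0)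
    _ = max C 0 * ‖L‖ * ‖v‖ := by ring

end Aux3

section Aux4
variable {d k : ℕ}

private lemma aux_single_norm (d : ℕ) (i : Fin d) : ‖(Pi.single i 1 : Fin d → ℝ)‖ ≤ 1 := by
  rw [pi_norm_le_iff_of_nonneg zero_le_one]
  intro j
  rw [Real.norm_eq_abs, Pi.single_apply]
  split_ifs <;> simp

private lemma aux_ker (εb : ℝ) (hεb : 0 < εb)
    (f : (Fin d → ℝ) → ℝ) (A : Matrix (Fin k) (Fin d) ℝ)
    (hcontract : ∀ x : Fin d → ℝ, ∑ i, (A.mulVec x) i ^ 2 ≤ ∑ i, x i ^ 2)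
    (g : (Fin k → ℝ) → ℝ)
    (hg : ContDiffOn ℝ 1 g {y : Fin k → ℝ | ∑ i, y i ^ 2 ≤ (1 + εb) ^ 2})
    (hfg : ∀ x : Fin d → ℝ, ∑ i, x i ^ 2 ≤ (1 + εb) ^ 2 → f x = g (A.mulVec x))
    (μ : Measure (Fin d → ℝ)) (hprob : IsProbabilityMeasure μ)
    (hsphere : μ {x : Fin d → ℝ | ∑ i, x i ^ 2 = 1} = 1)
    (H : Matrix (Fin d) (Fin d) ℝ)
    (hH : ∀ i j, H i j =
      ∫ x, fderiv ℝ f x (Pi.single i 1) * fderiv ℝ f x (Pi.single j 1) ∂μ)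
    (w : Fin d → ℝ) (hw : A.mulVec w = 0) : H.mulVec w = 0 := by
  have hone : (1:ℝ) < (1 + εb) ^ 2 := by nlinarith
  -- a.e. on the sphere
  have hms : MeasurableSet {x : Fin d → ℝ | ∑ i, x i ^ 2 = 1} := by
    have hc : Continuous (fun x : Fin d → ℝ => ∑ i, x i ^ 2) := by fun_prop
    exact hc.measurable (measurableSet_singleton 1)
  have hcompl : μ {x : Fin d → ℝ | ∑ i, x i ^ 2 = 1}ᶜ = 0 := by
    rw [prob_compl_eq_zero_iff hms]; exact hsphere
  have hae : ∀ᵐ x ∂μ, ∑ i, x i ^ 2 = 1 := by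
    rw [MeasureTheory.ae_iff]
    convert hcompl using 2
    rfl
  -- integrability
  obtain ⟨C, hC0, hC⟩ := aux_bound εb hεb f A hcontract g hg hfg
  have hint : ∀ i j : Fin d, Integrable
      (fun x => fderiv ℝ f x (Pi.single i 1) * fderiv ℝ f x (Pi.single j 1)) μ := by
    intro i j
    refine Integrable.mono' (integrable_const (C * C))
      (((measurable_fderiv_apply_const ℝ f _).mul
        (measurable_fderiv_apply_const ℝ f _)).aestronglyMeasurable) ?_
    filter_upwards [hae] with x hx
    have hb : ∀ l : Fin d, |fderiv ℝ f x (Pi.single l 1)| ≤ C := by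
      intro l
      calc |fderiv ℝ f x (Pi.single l 1)| ≤ C * ‖(Pi.single l 1 : Fin d → ℝ)‖ := hC x hx _
        _ ≤ C * 1 := by
            exact mul_le_mul_of_nonneg_left (aux_single_norm d l) hC0
        _ = C := mul_one C
    rw [Real.norm_eq_abs, abs_mul]
    exact mul_le_mul (hb i) (hb j) (abs_nonneg _) hC0
  -- main computation
  funext i
  have e0 : (H.mulVec w) i = ∑ j, H i j * w j := rfl
  rw [e0]
  simp_rw [hH i]
  have e1 : ∀ j : Fin d,
      (∫ x, fderiv ℝ f x (Pi.single i 1) * fderiv ℝ f x (Pi.single j 1) ∂μ) * w j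
      = ∫ x, fderiv ℝ f x (Pi.single i 1) * fderiv ℝ f x (Pi.single j 1) * w j ∂μ := by
    intro j
    rw [MeasureTheory.integral_mul_const]
  simp_rw [e1]
  rw [← MeasureTheory.integral_finset_sum Finset.univ
    (fun j _ => (hint i j).mul_const (w j))]
  have : ∀ᵐ x ∂μ, (∑ j, fderiv ℝ f x (Pi.single i 1) * fderiv ℝ f x (Pi.single j 1) * w j) = 0 := by
    filter_upwards [hae] with x hx
    have hx' : ∑ l, x l ^ 2 < (1 + εb) ^ 2 := by rw [hx]; exact hone
    have hsum : ∑ j, fderiv ℝ f x (Pi.single j 1) * w j = fderiv ℝ f x w := by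
      conv_rhs => rw [← Finset.univ_sum_single w]
      rw [map_sum]
      refine Finset.sum_congr rfl fun j _ => ?_
      have e : (Pi.single j (w j) : Fin d → ℝ) = (w j) • (Pi.single j 1 : Fin d → ℝ) := by
        rw [← Pi.single_smul, smul_eq_mul, mul_one]
      rw [e, (fderiv ℝ f x).map_smul, smul_eq_mul, mul_comm]
    have hzero : fderiv ℝ f x w = 0 := by
      rw [aux_fderiv εb hεb f A hcontract g hg hfg x hx']
      have : (fderiv ℝ g (A.mulVec x)).comp (LinearMap.toContinuousLinearMap A.mulVecLin) w
          = fderiv ℝ g (A.mulVec x) (A.mulVec w) := rfl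
      rw [this, hw, map_zero]
    calc (∑ j, fderiv ℝ f x (Pi.single i 1) * fderiv ℝ f x (Pi.single j 1) * w j)
        = fderiv ℝ f x (Pi.single i 1) * ∑ j, fderiv ℝ f x (Pi.single j 1) * w j := by
          rw [Finset.mul_sum]; exact Finset.sum_congr rfl fun j _ => by ring
      _ = 0 := by rw [hsum, hzero, mul_zero]
  rw [MeasureTheory.integral_eq_zero_of_ae this]
  rfl

end Aux4

/-- If `f = g ∘ A = g' ∘ A'` on the ball of radius `1+εb`, with `A, A'`
row-orthonormal `k × d` matrices and `g, g'` continuously differentiable, and the matrix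
`H^f = ∫_{S^{d-1}} ∇f ∇fᵀ dμ` has rank `k` (where `μ` is the rotation-invariant probability
measure on the unit sphere), then `A' = O A` for some `k × k` orthogonal matrix `O`. -/
theorem statement0
    (d k : ℕ) (hk : 0 < k) (hkd : k ≤ d) (εb : ℝ) (hεb : 0 < εb)
    (f : (Fin d → ℝ) → ℝ)
    (A A' : Matrix (Fin k) (Fin d) ℝ)
    (hA : A * Aᵀ = 1) (hA' : A' * A'ᵀ = 1)
    (g g' : (Fin k → ℝ) → ℝ)
    (hg : ContDiffOn ℝ 1 g {y : Fin k → ℝ | ∑ i, y i ^ 2 ≤ (1 + εb) ^ 2})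
    (hg' : ContDiffOn ℝ 1 g' {y : Fin k → ℝ | ∑ i, y i ^ 2 ≤ (1 + εb) ^ 2})
    (hfg : ∀ x : Fin d → ℝ, ∑ i, x i ^ 2 ≤ (1 + εb) ^ 2 → f x = g (A.mulVec x))
    (hfg' : ∀ x : Fin d → ℝ, ∑ i, x i ^ 2 ≤ (1 + εb) ^ 2 → f x = g' (A'.mulVec x))
    -- `μ` is the uniform (rotation-invariant) probability measure on the unit sphere
    (μ : Measure (Fin d → ℝ)) (hprob : IsProbabilityMeasure μ)
    (hsphere : μ {x : Fin d → ℝ | ∑ i, x i ^ 2 = 1} = 1)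
    (hinv : ∀ R : Matrix (Fin d) (Fin d) ℝ, R * Rᵀ = 1 → μ.map R.mulVec = μ)
    -- `H` is the matrix `H^f = ∫ ∇f(x) ∇f(x)ᵀ dμ(x)`
    (H : Matrix (Fin d) (Fin d) ℝ)
    (hH : ∀ i j, H i j =
      ∫ x, fderiv ℝ f x (Pi.single i 1) * fderiv ℝ f x (Pi.single j 1) ∂μ)
    (hrank : H.rank = k) :
    ∃ O : Matrix (Fin k) (Fin k) ℝ, O * Oᵀ = 1 ∧ Oᵀ * O = 1 ∧ A' = O * A := by
  have hcontract := aux_contract A hA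
  have hcontract' := aux_contract A' hA'
  have hkerA : ∀ w, A.mulVec w = 0 → H.mulVec w = 0 := fun w hw =>
    aux_ker εb hεb f A hcontract g hg hfg μ hprob hsphere H hH w hw
  have hkerA' : ∀ w, A'.mulVec w = 0 → H.mulVec w = 0 := fun w hw =>
    aux_ker εb hεb f A' hcontract' g' hg' hfg' μ hprob hsphere H hH w hw
  -- rank of A and A'
  have hrk : ∀ B : Matrix (Fin k) (Fin d) ℝ, B * Bᵀ = 1 → B.rank = k := by
    intro B hB
    refine le_antisymm (le_trans B.rank_le_card_height (by simp)) ?_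
    have h1 : (B * Bᵀ).rank ≤ B.rank := Matrix.rank_mul_le_left B Bᵀ
    rw [hB] at h1
    simpa using h1
  -- kernels
  set KA := LinearMap.ker A.mulVecLin with hKA
  set KA' := LinearMap.ker A'.mulVecLin with hKA'
  set KH := LinearMap.ker H.mulVecLin with hKH
  have hleA : KA ≤ KH := by
    intro w hw
    simp only [hKA, hKH, LinearMap.mem_ker, Matrix.mulVecLin_apply] at *
    exact hkerA w hw
  have hleA' : KA' ≤ KH := by
    intro w hw
    simp only [hKA', hKH, LinearMap.mem_ker, Matrix.mulVecLin_apply] at *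
    exact hkerA' w hw
  have hfinA : A.rank + Module.finrank ℝ KA = d := by
    rw [Matrix.rank]
    simpa using LinearMap.finrank_range_add_finrank_ker A.mulVecLin
  have hfinA' : A'.rank + Module.finrank ℝ KA' = d := by
    rw [Matrix.rank]
    simpa using LinearMap.finrank_range_add_finrank_ker A'.mulVecLin
  have hfinH : H.rank + Module.finrank ℝ KH = d := by
    rw [Matrix.rank]
    simpa using LinearMap.finrank_range_add_finrank_ker H.mulVecLin
  rw [hrk A hA] at hfinA
  rw [hrk A' hA'] at hfinA'
  rw [hrank] at hfinH
  have heqA : KA = KH := Submodule.eq_of_le_of_finrank_eq hleA (by omega)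
  have heqA' : KA' = KH := Submodule.eq_of_le_of_finrank_eq hleA' (by omega)
  have hker : ∀ w, A.mulVec w = 0 → A'.mulVec w = 0 := by
    intro w hw
    have hmem : w ∈ KA := by
      simp only [hKA, LinearMap.mem_ker, Matrix.mulVecLin_apply]
      exact hw
    rw [heqA, ← heqA'] at hmem
    simpa only [hKA', LinearMap.mem_ker, Matrix.mulVecLin_apply] using hmem
  -- algebra
  have hmain : A' = A' * Aᵀ * A := by
    have key : ∀ v, A'.mulVec v = (A' * Aᵀ * A).mulVec v := by
      intro v
      have h0 : A.mulVec (v - (Aᵀ * A).mulVec v) = 0 := by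
        rw [Matrix.mulVec_sub, Matrix.mulVec_mulVec, ← Matrix.mul_assoc, hA,
          Matrix.one_mul, sub_self]
      have h1 := hker _ h0
      rw [Matrix.mulVec_sub, sub_eq_zero] at h1
      rw [h1, Matrix.mulVec_mulVec, ← Matrix.mul_assoc]
    ext i j
    have := congrFun (key (Pi.single j 1)) i
    simpa [Matrix.mulVec_single] using this
  have hOOT : (A' * Aᵀ) * (A' * Aᵀ)ᵀ = 1 := by
    have ht : (A' * Aᵀ)ᵀ = A * A'ᵀ := by simp [Matrix.transpose_mul]
    rw [ht, ← Matrix.mul_assoc, ← hmain, hA']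
  exact ⟨A' * Aᵀ, hOOT, mul_eq_one_comm.mp hOOT, hmain⟩
end

section
/- Let a ∈ S^{d−1}, let g : [−1,1] → ℝ be continuously differentiable with ‖g'‖_∞ ≤ C₂, and set α := ∫_{S^{d−1}} |g'(a·ξ)|² dμ_{S^{d−1}}(ξ). Assume α > 0. Let ξ₁, …, ξ_{m} be independent random points, each distributed according to μ_{S^{d−1}}. Then for every 0 < s < 1, with probability at least 1 − 2·exp(−2·m·s²·α²/C₂⁴) one has max_{j=1,…,m} |g'(a·ξ_j)| ≥ √(α(1−s)). -/
open MeasureTheory Matrix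

lemma aux_exp (t : ℝ) (h0 : 0 ≤ t) (h1 : t ≤ 1) : 1 - t ≤ Real.exp (-(2*t^2)) := by
  rcases le_or_gt t (1/2) with h | h
  · have h2 : 1 - 2*t^2 ≤ Real.exp (-(2*t^2)) := by
      have := Real.add_one_le_exp (-(2*t^2)); linarith
    nlinarith
  · have h2 : 1 - t^2/2 ≤ Real.exp (-(t^2/2)) := by
      have := Real.add_one_le_exp (-(t^2/2)); linarith
    have h3 : (0:ℝ) ≤ 1 - t^2/2 := by nlinarith
    have h4 : (1 - t^2/2)^4 ≤ Real.exp (-(t^2/2))^4 := pow_le_pow_left₀ h3 h2 4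
    have h5 : Real.exp (-(t^2/2))^4 = Real.exp (-(2*t^2)) := by
      rw [← Real.exp_nat_mul]; ring_nf
    have h0' : (1:ℝ)/2 ≤ t := h.le
    have h6 : 1 - t ≤ (1 - t^2/2)^4 := by
      nlinarith [sq_nonneg (t - 4/5), sq_nonneg (t^2 - 16/25),
        mul_nonneg (sub_nonneg.2 h0') (sub_nonneg.2 h1), sq_nonneg ((t-4/5)*(1-t)),
        sq_nonneg ((t-4/5)*t),
        mul_nonneg (mul_nonneg (sub_nonneg.2 h0') (sub_nonneg.2 h1)) (sq_nonneg (t-4/5))]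
    linarith

/-- Let `a` be a unit vector, `g : [-1,1] → ℝ` continuously differentiable
with `|g'| ≤ C₂`, and `α := ∫_{S^{d-1}} |g'(a·ξ)|² dμ(ξ) > 0`.  If `ξ₁, …, ξ_m` are i.i.d.
with law the uniform probability measure `μ` on the sphere, then with probability at least
`1 - 2 exp(-2 m s² α² / C₂⁴)` one has `max_j |g'(a·ξ_j)| ≥ √(α(1-s))`. -/
theorem statement2
    (d m : ℕ) (hd : 0 < d) (hm : 0 < m)
    (a : Fin d → ℝ) (ha : ∑ i, a i ^ 2 = 1)
    -- `μ` is the uniform (rotation-invariant) probability measure on the unit sphere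
    (μ : Measure (Fin d → ℝ)) (hprob : IsProbabilityMeasure μ)
    (hsphere : μ {x : Fin d → ℝ | ∑ i, x i ^ 2 = 1} = 1)
    (hinv : ∀ R : Matrix (Fin d) (Fin d) ℝ, R * Rᵀ = 1 → μ.map R.mulVec = μ)
    (g g' : ℝ → ℝ) (C₂ : ℝ)
    (hg : ∀ y ∈ Set.Icc (-1 : ℝ) 1, HasDerivWithinAt g (g' y) (Set.Icc (-1 : ℝ) 1) y)
    (hg'cont : ContinuousOn g' (Set.Icc (-1 : ℝ) 1))
    (hC₂ : ∀ y ∈ Set.Icc (-1 : ℝ) 1, |g' y| ≤ C₂)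
    (α : ℝ) (hα : α = ∫ x, (g' (∑ i, a i * x i)) ^ 2 ∂μ) (hαpos : 0 < α)
    (s : ℝ) (hs0 : 0 < s) (hs1 : s < 1) :
    ENNReal.ofReal (1 - 2 * Real.exp (-(2 * m * s ^ 2 * α ^ 2 / C₂ ^ 4))) ≤
      Measure.pi (fun _ : Fin m => μ)
        {ξ : Fin m → Fin d → ℝ |
          ∃ j : Fin m, Real.sqrt (α * (1 - s)) ≤ |g' (∑ i, a i * ξ j i)|} := by
  haveI := hprob
  set β := Real.sqrt (α * (1 - s)) with hβdef
  have hC0 : 0 ≤ C₂ := le_trans (abs_nonneg _) (hC₂ 0 (by norm_num))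
  -- clamp function
  set c : ℝ → ℝ := fun y => max (-1) (min 1 y) with hcdef
  have hcmem : ∀ y, c y ∈ Set.Icc (-1:ℝ) 1 := by
    intro y
    constructor
    · exact le_max_left _ _
    · exact max_le (by norm_num) (min_le_left _ _)
  set h : ℝ → ℝ := fun y => g' (c y) with hhdef
  have hccont : Continuous c := continuous_const.max (continuous_const.min continuous_id)
  have hhcont : Continuous h := hg'cont.comp_continuous hccont hcmem
  set L : (Fin d → ℝ) → ℝ := fun x => ∑ i, a i * x i with hLdef
  have hLcont : Continuous L := by
    apply continuous_finset_sum
    intro i _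
    exact continuous_const.mul (continuous_apply i)
  set Sp : Set (Fin d → ℝ) := {x | ∑ i, x i ^ 2 = 1} with hSpdef
  have hSpmeas : MeasurableSet Sp := by
    have hcont : Continuous (fun x : Fin d → ℝ => ∑ i, x i ^ 2) := by
      apply continuous_finset_sum
      intro i _
      exact (continuous_apply i).pow 2
    exact measurableSet_eq_fun hcont.measurable measurable_const
  have hLx : ∀ x ∈ Sp, L x ∈ Set.Icc (-1:ℝ) 1 := by
    intro x hx
    have hcs := Finset.sum_mul_sq_le_sq_mul_sq Finset.univ a x
    rw [ha, hx] at hcs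
    have : (L x)^2 ≤ 1 := by simpa using hcs
    constructor <;> nlinarith
  have hcL : ∀ x ∈ Sp, c (L x) = L x := by
    intro x hx
    have h1 := hLx x hx
    simp only [hcdef]
    rw [min_eq_right h1.2, max_eq_right h1.1]
  have hhL : ∀ x ∈ Sp, h (L x) = g' (L x) := by
    intro x hx; simp only [hhdef]; rw [hcL x hx]
  set E : Set (Fin d → ℝ) := Sp ∩ {x | β ≤ |h (L x)|} with hEdef
  have hEmeas : MeasurableSet E := by
    apply hSpmeas.inter
    exact measurableSet_le measurable_const
      ((hhcont.comp hLcont).abs.measurable)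
  -- almost every point lies on the sphere
  have hae : ∀ᵐ x ∂μ, x ∈ Sp := by
    rw [ae_iff]
    have := measure_compl hSpmeas (measure_ne_top μ _)
    rw [hsphere, measure_univ] at this
    exact (by simpa using this : μ Spᶜ = 0)
  have hα2 : α = ∫ x, (h (L x))^2 ∂μ := by
    rw [hα]
    apply integral_congr_ae
    filter_upwards [hae] with x hx
    rw [hhL x hx]
  have hbound : ∀ x, (h (L x))^2 ≤ C₂^2 := by
    intro x
    have h1 := hC₂ (c (L x)) (hcmem _)
    have h2 : |h (L x)| ≤ C₂ := h1
    nlinarith [abs_nonneg (h (L x)), sq_abs (h (L x))]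
  have hint : Integrable (fun x => (h (L x))^2) μ := by
    apply Integrable.mono' (integrable_const (C₂^2))
    · exact (((hhcont.comp hLcont).pow 2).aestronglyMeasurable)
    · filter_upwards with x
      rw [Real.norm_eq_abs, abs_of_nonneg (sq_nonneg _)]
      exact hbound x
  set q : ℝ := (μ E).toReal with hqdef
  have hq0 : 0 ≤ q := ENNReal.toReal_nonneg
  have hq1 : q ≤ 1 := by
    rw [hqdef]
    have := prob_le_one (μ := μ) (s := E)
    simpa using ENNReal.toReal_mono (by norm_num) this
  have hαs : 0 ≤ α * (1 - s) := by nlinarith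
  have hβ2 : β^2 = α * (1 - s) := Real.sq_sqrt hαs
  -- the key one-point estimate : s α ≤ C₂² q
  have hle : α ≤ α*(1-s) + (C₂^2 - α*(1-s)) * q := by
    have hbint : Integrable
        (fun x => α*(1-s) + E.indicator (fun _ => C₂^2 - α*(1-s)) x) μ :=
      (integrable_const _).add ((integrable_const _).indicator hEmeas)
    have hmono : ∀ᵐ x ∂μ, (h (L x))^2 ≤
        α*(1-s) + E.indicator (fun _ => C₂^2 - α*(1-s)) x := by
      filter_upwards [hae] with x hx
      by_cases hxE : x ∈ E
      · rw [Set.indicator_of_mem hxE]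
        linarith [hbound x]
      · rw [Set.indicator_of_notMem hxE, add_zero]
        have hlt : |h (L x)| < β := by
          by_contra hcon
          exact hxE ⟨hx, le_of_not_gt hcon⟩
        have : (h (L x))^2 < β^2 := by
          rw [← sq_abs]
          exact pow_lt_pow_left₀ hlt (abs_nonneg _) (by norm_num)
        linarith [hβ2 ▸ this]
    have hmain := integral_mono_ae hint hbint hmono
    rw [← hα2] at hmain
    rw [integral_add (integrable_const _) ((integrable_const _).indicator hEmeas),
      integral_const, integral_indicator_const _ hEmeas, measureReal_def, measure_univ] at hmain
    simp only [ENNReal.toReal_one, smul_eq_mul, one_mul, measureReal_def] at hmain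
    linarith [hmain]
  have hkey : s * α ≤ C₂^2 * q := by nlinarith [mul_nonneg hαs hq0]
  have hC₂pos : 0 < C₂ := by nlinarith
  set t : ℝ := s * α / C₂^2 with htdef
  have hC₂sq : 0 < C₂^2 := by positivity
  have ht0 : 0 ≤ t := by positivity
  have htq : t ≤ q := by rw [htdef, div_le_iff₀ hC₂sq]; linarith
  have ht1 : t ≤ 1 := le_trans htq hq1
  -- the product measure
  set ν := Measure.pi (fun _ : Fin m => μ) with hνdef
  haveI : IsProbabilityMeasure ν := by
    rw [hνdef]; infer_instance
  set S' : Set (Fin m → Fin d → ℝ) := ⋃ j, (fun ξ => ξ j) ⁻¹' E with hS'def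
  have hS'meas : MeasurableSet S' :=
    MeasurableSet.iUnion fun j => (measurable_pi_apply j) hEmeas
  have hsub : ν S' ≤ ν {ξ : Fin m → Fin d → ℝ |
      ∃ j : Fin m, Real.sqrt (α * (1 - s)) ≤ |g' (∑ i, a i * ξ j i)|} := by
    apply measure_mono
    intro ξ hξ
    rw [hS'def] at hξ
    obtain ⟨U, ⟨j, rfl⟩, hj⟩ := hξ
    refine ⟨j, ?_⟩
    have hjE : ξ j ∈ E := hj
    have h1 : ξ j ∈ Sp := hjE.1
    have h2 : β ≤ |h (L (ξ j))| := hjE.2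
    rw [hhL _ h1] at h2
    exact h2
  have hcompl : S'ᶜ = Set.pi Set.univ (fun _ : Fin m => Eᶜ) := by
    rw [hS'def]
    ext ξ
    simp [Set.mem_pi]
  have hνcompl : ν S'ᶜ = (μ Eᶜ)^m := by
    rw [hcompl, hνdef, Measure.pi_pi]
    simp [Finset.prod_const]
  set r : ℝ := (μ Eᶜ).toReal with hrdef
  have hr0 : 0 ≤ r := ENNReal.toReal_nonneg
  have hqr : q + r = 1 := by
    have h1 : μ E + μ Eᶜ = 1 := by
      rw [measure_add_measure_compl hEmeas, measure_univ]
    have := congrArg ENNReal.toReal h1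
    rwa [ENNReal.toReal_add (measure_ne_top _ _) (measure_ne_top _ _),
      ENNReal.toReal_one] at this
  have hμEc : μ Eᶜ = ENNReal.ofReal r :=
    (ENNReal.ofReal_toReal (measure_ne_top _ _)).symm
  have hνS' : ν S' = 1 - ENNReal.ofReal (r^m) := by
    have h1 : ν S' = ν Set.univ - ν S'ᶜ := by
      have := measure_compl hS'meas.compl (measure_ne_top ν _)
      rwa [compl_compl] at this
    rw [h1, measure_univ, hνcompl, hμEc, ← ENNReal.ofReal_pow hr0]
  -- the real inequality
  have hreal : r^m ≤ 2 * Real.exp (-(2 * m * s ^ 2 * α ^ 2 / C₂ ^ 4)) := by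
    have h1 : r ≤ 1 - t := by linarith
    have h2 : r^m ≤ (1-t)^m := pow_le_pow_left₀ hr0 h1 m
    have h3 : (1-t)^m ≤ Real.exp (-(2*t^2))^m :=
      pow_le_pow_left₀ (by linarith) (aux_exp t ht0 ht1) m
    have h4 : Real.exp (-(2*t^2))^m = Real.exp (-(2 * m * s ^ 2 * α ^ 2 / C₂ ^ 4)) := by
      rw [← Real.exp_nat_mul]
      congr 1
      rw [htdef]
      field_simp
    have h5 : 0 < Real.exp (-(2 * m * s ^ 2 * α ^ 2 / C₂ ^ 4)) := Real.exp_pos _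
    calc r^m ≤ (1-t)^m := h2
      _ ≤ Real.exp (-(2*t^2))^m := h3
      _ = Real.exp (-(2 * m * s ^ 2 * α ^ 2 / C₂ ^ 4)) := h4
      _ ≤ 2 * Real.exp (-(2 * m * s ^ 2 * α ^ 2 / C₂ ^ 4)) := by linarith
  refine le_trans ?_ hsub
  rw [hνS']
  have hofr : ENNReal.ofReal (1 - r^m) = 1 - ENNReal.ofReal (r^m) := by
    rw [ENNReal.ofReal_sub _ (pow_nonneg hr0 m), ENNReal.ofReal_one]
  rw [← hofr]
  apply ENNReal.ofReal_le_ofReal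
  linarith
end

section
/- Let 1 ≤ k < d with d ≥ k + 2, and let μ_k be the probability measure on the unit ball B_{ℝ^k} with Lebesgue density (Γ(d/2)/(π^{k/2} Γ((d−k)/2))) · (1 − ‖y‖₂²)^{(d−2−k)/2}. Then for every 0 < ε < 1, μ_k(B_{ℝ^k}(ε)) ≥ 1 − (2Γ(d/2)/(Γ(k/2)Γ((d−k)/2))) · exp(−((d−2−k)/2)·ε²). -/
open MeasureTheory Set
set_option maxHeartbeats 1000000

private lemma real_beta (a b : ℝ) (ha : 0 < a) (hb : 0 < b) :
    ∫ x in (0:ℝ)..1, x ^ (a - 1) * (1 - x) ^ (b - 1) =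
      Real.Gamma a * Real.Gamma b / Real.Gamma (a + b) := by
  have hB := Complex.Gamma_mul_Gamma_eq_betaIntegral (s := (a:ℂ)) (t := (b:ℂ))
    (by simpa using ha) (by simpa using hb)
  have hBr : Complex.betaIntegral a b =
      ((∫ x in (0:ℝ)..1, x ^ (a - 1) * (1 - x) ^ (b - 1) : ℝ) : ℂ) := by
    rw [Complex.betaIntegral, ← intervalIntegral.integral_ofReal]
    refine intervalIntegral.integral_congr fun x hx => ?_
    rw [Set.uIcc_of_le (zero_le_one)] at hx
    rw [Complex.ofReal_mul, Complex.ofReal_cpow hx.1,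
      Complex.ofReal_cpow (by linarith [hx.2] : (0:ℝ) ≤ 1 - x)]
    push_cast
    ring
  rw [hBr] at hB
  have key : Real.Gamma a * Real.Gamma b =
      Real.Gamma (a + b) * ∫ x in (0:ℝ)..1, x ^ (a - 1) * (1 - x) ^ (b - 1) := by
    have := hB
    rw [← Complex.ofReal_add, Complex.Gamma_ofReal, Complex.Gamma_ofReal,
      Complex.Gamma_ofReal, ← Complex.ofReal_mul, ← Complex.ofReal_mul] at this
    exact_mod_cast this
  have hG : Real.Gamma (a + b) ≠ 0 := (Real.Gamma_pos_of_pos (by linarith)).ne'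
  field_simp [key]
  rw [key]; ring

private lemma ioc_beta (k : ℕ) (hk : 1 ≤ k) (α : ℝ) (hα : 0 ≤ α) :
    ∫ r in Ioc (0:ℝ) 1, (r : ℝ) ^ (k - 1) * (1 - r ^ 2) ^ α =
      Real.Gamma ((k:ℝ)/2) * Real.Gamma (α + 1) /
        (2 * Real.Gamma ((k:ℝ)/2 + (α + 1))) := by
  have hk0 : (0:ℝ) < (k:ℝ) := by exact_mod_cast hk
  set a : ℝ := (k:ℝ)/2 with ha_def
  have ha : 0 < a := by positivity
  set g : ℝ → ℝ := Set.indicator (Ioc (0:ℝ) 1) (fun u => u ^ (a - 1) * (1 - u) ^ α) with hg_def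
  have subst := integral_comp_rpow_Ioi_of_pos (g := g) (p := 2) two_pos
  have hL : (∫ x in Ioi (0:ℝ), ((2:ℝ) * x ^ ((2:ℝ) - 1)) • g (x ^ (2:ℝ)))
      = 2 * ∫ r in Ioc (0:ℝ) 1, (r:ℝ) ^ (k - 1) * (1 - r ^ 2) ^ α := by
    rw [setIntegral_congr_fun measurableSet_Ioi
      (g := fun x => Set.indicator (Ioc (0:ℝ) 1)
        (fun r : ℝ => 2 * (r ^ (k - 1) * (1 - r ^ 2) ^ α)) x) ?_]
    · rw [setIntegral_indicator measurableSet_Ioc,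
        Set.inter_eq_self_of_subset_right Ioc_subset_Ioi_self, integral_const_mul]
    · intro x hx
      dsimp only
      rw [hg_def]
      have hx0 : (0:ℝ) < x := hx
      have h1 : x ^ ((2:ℝ) - 1) = x := by norm_num
      have h2 : x ^ (2:ℝ) = x ^ (2:ℕ) := by
        rw [← Real.rpow_natCast x 2]; norm_num
      by_cases hmem : x ∈ Ioc (0:ℝ) 1
      · have hmem2 : x ^ (2:ℕ) ∈ Ioc (0:ℝ) 1 := ⟨by positivity, by nlinarith [hmem.2]⟩
        rw [Set.indicator_of_mem hmem, h2, Set.indicator_of_mem hmem2]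
        simp only [smul_eq_mul, h1]
        have hxpow : x * (x ^ (2:ℕ)) ^ (a - 1) = x ^ (k - 1 : ℕ) := by
          rw [← Real.rpow_natCast x 2, ← Real.rpow_mul hx0.le]
          nth_rewrite 1 [← Real.rpow_one x]
          rw [← Real.rpow_add hx0]
          rw [show (1 + ((2:ℕ):ℝ) * (a - 1) : ℝ) = ((k - 1 : ℕ) : ℝ) by
            rw [Nat.cast_sub hk]; push_cast [ha_def]; ring]
          rw [Real.rpow_natCast]
        calc 2 * x * ((x ^ (2:ℕ)) ^ (a - 1) * (1 - x ^ (2:ℕ)) ^ α)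
            = 2 * ((x * (x ^ (2:ℕ)) ^ (a - 1)) * (1 - x ^ (2:ℕ)) ^ α) := by ring
          _ = 2 * (x ^ (k - 1 : ℕ) * (1 - x ^ (2:ℕ)) ^ α) := by rw [hxpow]
      · have hmem2 : x ^ (2:ℕ) ∉ Ioc (0:ℝ) 1 := by
          intro h
          exact hmem ⟨hx0, by nlinarith [h.2]⟩
        rw [Set.indicator_of_notMem hmem, h2, Set.indicator_of_notMem hmem2, smul_zero]
  have hR : (∫ y in Ioi (0:ℝ), g y) = ∫ u in Ioc (0:ℝ) 1, u ^ (a - 1) * (1 - u) ^ α := by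
    rw [hg_def, setIntegral_indicator measurableSet_Ioc,
      Set.inter_eq_self_of_subset_right Ioc_subset_Ioi_self]
  have hbeta : (∫ u in Ioc (0:ℝ) 1, u ^ (a - 1) * (1 - u) ^ α)
      = Real.Gamma a * Real.Gamma (α + 1) / Real.Gamma (a + (α + 1)) := by
    rw [← intervalIntegral.integral_of_le zero_le_one]
    have := real_beta a (α + 1) ha (by linarith)
    simpa using this
  have h2J : 2 * (∫ r in Ioc (0:ℝ) 1, (r:ℝ) ^ (k - 1) * (1 - r ^ 2) ^ α)
      = Real.Gamma a * Real.Gamma (α + 1) / Real.Gamma (a + (α + 1)) := by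
    rw [← hL, subst, hR, hbeta]
  have hGpos : 0 < Real.Gamma (a + (α + 1)) := Real.Gamma_pos_of_pos (by linarith)
  field_simp at h2J ⊢
  linarith [h2J]
/-- For `1 ≤ k < d`, `d ≥ k + 2`, and `0 < ε < 1`, the measure `μ_k` with
Lebesgue density `Γ(d/2)/(π^{k/2}Γ((d-k)/2)) (1-‖y‖²)^{(d-2-k)/2}` on the unit ball satisfies
`μ_k(B_{ℝ^k}(ε)) ≥ 1 - (2Γ(d/2)/(Γ(k/2)Γ((d-k)/2))) exp(-((d-2-k)/2) ε²)`. -/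
theorem statement4
    (d k : ℕ) (hk : 1 ≤ k) (hkd : k < d) (hd : k + 2 ≤ d)
    (ε : ℝ) (hε0 : 0 < ε) (hε1 : ε < 1) :
    1 - 2 * Real.Gamma ((d : ℝ) / 2) /
          (Real.Gamma ((k : ℝ) / 2) * Real.Gamma (((d : ℝ) - k) / 2)) *
        Real.exp (-(((d : ℝ) - 2 - k) / 2) * ε ^ 2) ≤
      ∫ y in {y : Fin k → ℝ | ∑ i, y i ^ 2 ≤ ε ^ 2},
        Real.Gamma ((d : ℝ) / 2) /
            (Real.pi ^ ((k : ℝ) / 2) * Real.Gamma (((d : ℝ) - k) / 2)) *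
          (1 - ∑ i, y i ^ 2) ^ (((d : ℝ) - 2 - k) / 2) := by
  have hk0 : (0:ℝ) < (k:ℝ) := by exact_mod_cast hk
  have hdk : (k:ℝ) < (d:ℝ) := by exact_mod_cast hkd
  have hd2 : (k:ℝ) + 2 ≤ (d:ℝ) := by exact_mod_cast hd
  set α : ℝ := ((d:ℝ) - 2 - (k:ℝ)) / 2 with hα_def
  have hα : 0 ≤ α := by rw [hα_def]; linarith
  set A : ℝ := Real.Gamma ((d:ℝ) / 2) with hA_def
  set B : ℝ := Real.Gamma ((k:ℝ) / 2) with hB_def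
  set C : ℝ := Real.Gamma (((d:ℝ) - (k:ℝ)) / 2) with hC_def
  set P : ℝ := Real.pi ^ ((k:ℝ) / 2) with hP_def
  set c : ℝ := A / (P * C) with hc_def
  have hApos : 0 < A := by rw [hA_def]; exact Real.Gamma_pos_of_pos (by linarith)
  have hBpos : 0 < B := by rw [hB_def]; exact Real.Gamma_pos_of_pos (by linarith)
  have hCpos : 0 < C := by rw [hC_def]; exact Real.Gamma_pos_of_pos (by linarith)
  have hPpos : 0 < P := by rw [hP_def]; positivity
  have hcpos : 0 < c := by rw [hc_def]; positivity
  haveI : Nonempty (Fin k) := ⟨⟨0, hk⟩⟩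
  haveI : Nontrivial (EuclideanSpace ℝ (Fin k)) := by
    apply Module.nontrivial_of_finrank_pos (R := ℝ)
    rw [finrank_euclideanSpace_fin]
    omega
  have hmp := EuclideanSpace.volume_preserving_symm_measurableEquiv_toLp (Fin k)
  have htrans : (∫ y in {y : Fin k → ℝ | ∑ i, y i ^ 2 ≤ ε ^ 2},
        c * (1 - ∑ i, y i ^ 2) ^ α)
      = ∫ x in {x : EuclideanSpace ℝ (Fin k) | ∑ i, x i ^ 2 ≤ ε ^ 2},
          c * (1 - ∑ i, x i ^ 2) ^ α := by
    rw [← hmp.setIntegral_preimage_emb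
      (MeasurableEquiv.toLp 2 (Fin k → ℝ)).symm.measurableEmbedding]
    rfl
  have hnorm : ∀ x : EuclideanSpace ℝ (Fin k), ∑ i, x i ^ 2 = ‖x‖ ^ 2 := fun x => by
    rw [EuclideanSpace.norm_eq, Real.sq_sqrt (by positivity)]
    simp [Real.norm_eq_abs, sq_abs]
  have hsetnorm : {x : EuclideanSpace ℝ (Fin k) | ∑ i, x i ^ 2 ≤ ε ^ 2}
      = {x : EuclideanSpace ℝ (Fin k) | ‖x‖ ≤ ε} := by
    ext x
    simp only [Set.mem_setOf_eq, hnorm x]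
    constructor
    · intro h; nlinarith [norm_nonneg x]
    · intro h; nlinarith [norm_nonneg x]
  set F : ℝ → ℝ := Set.indicator (Iic ε) (fun r => c * (1 - r ^ 2) ^ α) with hF_def
  have hms : MeasurableSet {x : EuclideanSpace ℝ (Fin k) | ‖x‖ ≤ ε} := by
    have : {x : EuclideanSpace ℝ (Fin k) | ‖x‖ ≤ ε} = Metric.closedBall 0 ε := by
      ext x; simp [Metric.mem_closedBall, dist_zero_right]
    rw [this]; exact measurableSet_closedBall
  have hIndic : (∫ x in {x : EuclideanSpace ℝ (Fin k) | ∑ i, x i ^ 2 ≤ ε ^ 2},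
        c * (1 - ∑ i, x i ^ 2) ^ α)
      = ∫ x : EuclideanSpace ℝ (Fin k), F ‖x‖ := by
    rw [hsetnorm, ← integral_indicator hms]
    congr 1
    funext x
    by_cases h : ‖x‖ ≤ ε
    · rw [Set.indicator_of_mem
        (show x ∈ {x : EuclideanSpace ℝ (Fin k) | ‖x‖ ≤ ε} from h), hF_def,
        Set.indicator_of_mem (show ‖x‖ ∈ Iic ε from h), hnorm x]
    · rw [Set.indicator_of_notMem
        (show x ∉ {x : EuclideanSpace ℝ (Fin k) | ‖x‖ ≤ ε} from h), hF_def,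
        Set.indicator_of_notMem (show ‖x‖ ∉ Iic ε from h)]
  have hpolar := integral_fun_norm_addHaar (volume : Measure (EuclideanSpace ℝ (Fin k))) F
  rw [finrank_euclideanSpace_fin] at hpolar
  set J : ℝ → ℝ := fun t => ∫ r in Ioc (0:ℝ) t, (r:ℝ) ^ (k - 1) * (1 - r ^ 2) ^ α
    with hJ_def
  have hFr : (∫ r in Ioi (0:ℝ), r ^ (k - 1) • F r) = c * J ε := by
    rw [setIntegral_congr_fun measurableSet_Ioi
      (g := fun r : ℝ => Set.indicator (Ioc (0:ℝ) ε)
        (fun r => c * (r ^ (k - 1) * (1 - r ^ 2) ^ α)) r) ?_]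
    · rw [setIntegral_indicator measurableSet_Ioc,
        Set.inter_eq_self_of_subset_right Ioc_subset_Ioi_self, integral_const_mul]
    · intro r hr
      dsimp only
      rw [hF_def]
      by_cases h : r ≤ ε
      · rw [Set.indicator_of_mem (show r ∈ Iic ε from h),
          Set.indicator_of_mem (show r ∈ Ioc (0:ℝ) ε from ⟨hr, h⟩), smul_eq_mul]
        ring
      · rw [Set.indicator_of_notMem (show r ∉ Iic ε from h),
          Set.indicator_of_notMem (show r ∉ Ioc (0:ℝ) ε from fun hmem => h hmem.2),
          smul_zero]
  have hφcont : Continuous (fun r : ℝ => (r:ℝ) ^ (k - 1) * (1 - r ^ 2) ^ α) :=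
    (continuous_pow _).mul
      ((continuous_const.sub (continuous_pow 2)).rpow_const (fun x => Or.inr hα))
  have hint01 : IntegrableOn (fun r : ℝ => (r:ℝ) ^ (k - 1) * (1 - r ^ 2) ^ α)
      (Ioc (0:ℝ) 1) := hφcont.integrableOn_Ioc
  have hJsplit : J 1 = J ε + ∫ r in Ioc ε 1, (r:ℝ) ^ (k - 1) * (1 - r ^ 2) ^ α := by
    rw [hJ_def]
    dsimp only
    rw [← Set.Ioc_union_Ioc_eq_Ioc hε0.le hε1.le,
      setIntegral_union (Set.Ioc_disjoint_Ioc_of_le le_rfl) measurableSet_Ioc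
        (hint01.mono_set (Set.Ioc_subset_Ioc_right hε1.le))
        (hint01.mono_set (Set.Ioc_subset_Ioc_left hε0.le))]
  have hJ1 : J 1 = B * C / (2 * A) := by
    rw [hJ_def]
    dsimp only
    rw [ioc_beta k hk α hα,
      show α + 1 = ((d:ℝ) - (k:ℝ)) / 2 by rw [hα_def]; ring,
      show (k:ℝ)/2 + ((d:ℝ) - (k:ℝ))/2 = (d:ℝ)/2 by ring,
      hA_def, hB_def, hC_def]
  have hIoc01 : (∫ r in Ioc (0:ℝ) 1, (r:ℝ) ^ (k - 1)) = 1 / (k:ℝ) := by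
    rw [← intervalIntegral.integral_of_le zero_le_one, integral_pow,
      one_pow, zero_pow (Nat.succ_ne_zero _), sub_zero]
    congr 1
    rw [Nat.cast_sub hk]
    ring
  have h1ε2 : (0:ℝ) ≤ 1 - ε ^ 2 := by nlinarith
  have htail : (∫ r in Ioc ε 1, (r:ℝ) ^ (k - 1) * (1 - r ^ 2) ^ α)
      ≤ (1 - ε ^ 2) ^ α * (1 / (k:ℝ)) := by
    have hstep1 : (∫ r in Ioc ε 1, (r:ℝ) ^ (k - 1) * (1 - r ^ 2) ^ α)
        ≤ ∫ r in Ioc ε 1, (1 - ε ^ 2) ^ α * (r:ℝ) ^ (k - 1) := by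
      refine setIntegral_mono_on (hint01.mono_set (Set.Ioc_subset_Ioc_left hε0.le))
        ((continuous_const.mul (continuous_pow _)).integrableOn_Ioc) measurableSet_Ioc ?_
      intro r hr
      have h1 : (0:ℝ) ≤ 1 - r ^ 2 := by nlinarith [hr.2, hr.1]
      have h2 : 1 - r ^ 2 ≤ 1 - ε ^ 2 := by nlinarith [hr.1]
      have h3 := Real.rpow_le_rpow h1 h2 hα
      have hrpos : (0:ℝ) ≤ (r:ℝ) ^ (k - 1) := pow_nonneg (le_trans hε0.le hr.1.le) _
      calc (r:ℝ) ^ (k - 1) * (1 - r ^ 2) ^ α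
          ≤ (r:ℝ) ^ (k - 1) * (1 - ε ^ 2) ^ α := mul_le_mul_of_nonneg_left h3 hrpos
        _ = (1 - ε ^ 2) ^ α * (r:ℝ) ^ (k - 1) := by ring
    have hstep3 : (∫ r in Ioc ε 1, (r:ℝ) ^ (k - 1)) ≤ 1 / (k:ℝ) := by
      rw [← hIoc01]
      refine setIntegral_mono_set ((continuous_pow _).integrableOn_Ioc) ?_ ?_
      · exact (ae_restrict_iff' measurableSet_Ioc).mpr
          (ae_of_all _ fun r hr => pow_nonneg hr.1.le _)
      · exact HasSubset.Subset.eventuallyLE (Set.Ioc_subset_Ioc_left hε0.le)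
    calc (∫ r in Ioc ε 1, (r:ℝ) ^ (k - 1) * (1 - r ^ 2) ^ α)
        ≤ ∫ r in Ioc ε 1, (1 - ε ^ 2) ^ α * (r:ℝ) ^ (k - 1) := hstep1
      _ = (1 - ε ^ 2) ^ α * ∫ r in Ioc ε 1, (r:ℝ) ^ (k - 1) := integral_const_mul _ _
      _ ≤ (1 - ε ^ 2) ^ α * (1 / (k:ℝ)) :=
          mul_le_mul_of_nonneg_left hstep3 (Real.rpow_nonneg h1ε2 _)
  have hV : (volume (Metric.ball (0 : EuclideanSpace ℝ (Fin k)) 1)).toReal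
      = P / Real.Gamma ((k:ℝ)/2 + 1) := by
    rw [EuclideanSpace.volume_ball]
    simp only [Fintype.card_fin, ENNReal.ofReal_one, one_pow, one_mul]
    rw [ENNReal.toReal_ofReal (div_nonneg (by positivity)
      (Real.Gamma_pos_of_pos (by positivity)).le)]
    congr 1
    rw [hP_def, Real.sqrt_eq_rpow, ← Real.rpow_natCast (Real.pi ^ ((1:ℝ)/2)) k,
      ← Real.rpow_mul Real.pi_pos.le]
    congr 1
    ring
  have hG1 : Real.Gamma ((k:ℝ)/2 + 1) = (k:ℝ)/2 * B := by
    rw [Real.Gamma_add_one (by positivity), hB_def]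
  have hexp : (1 - ε ^ 2) ^ α ≤ Real.exp (-α * ε ^ 2) := by
    have h2 : 1 - ε ^ 2 ≤ Real.exp (-ε ^ 2) := by
      linarith [Real.add_one_le_exp (-ε ^ 2)]
    calc (1 - ε ^ 2) ^ α ≤ (Real.exp (-ε ^ 2)) ^ α := Real.rpow_le_rpow h1ε2 h2 hα
      _ = Real.exp (-ε ^ 2 * α) := (Real.exp_mul _ _).symm
      _ = Real.exp (-α * ε ^ 2) := by ring_nf
  set T : ℝ := ∫ r in Ioc ε 1, (r:ℝ) ^ (k - 1) * (1 - r ^ 2) ^ α with hT_def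
  have hTexp : T ≤ Real.exp (-α * ε ^ 2) := by
    calc T ≤ (1 - ε ^ 2) ^ α * (1 / (k:ℝ)) := htail
      _ ≤ Real.exp (-α * ε ^ 2) * 1 := by
          refine mul_le_mul hexp ?_ (by positivity) (Real.exp_pos _).le
          rw [div_le_one hk0]
          exact_mod_cast hk
      _ = Real.exp (-α * ε ^ 2) := mul_one _
  have hJε : J ε = B * C / (2 * A) - T := by
    rw [← hJ1]; linarith [hJsplit]
  rw [htrans, hIndic, hpolar, hFr, measureReal_def, hV, hG1, hJε, nsmul_eq_mul, smul_eq_mul]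
  have key : (k:ℝ) * (P / ((k:ℝ)/2 * B) * (c * (B * C / (2 * A) - T)))
      = 1 - 2 * A / (B * C) * T := by
    rw [hc_def]
    field_simp
  rw [key]
  have h2ABC : 0 ≤ 2 * A / (B * C) := by positivity
  linarith [mul_le_mul_of_nonneg_left hTexp h2ABC]
end

section
/- Fix M ∈ ℕ and let g : [−1,1] → ℝ be continuously differentiable with ‖g'‖_∞ < ∞, such that g is (M+2)-times continuously differentiable in an open neighborhood 𝒰 of 0 and g^{(ℓ)}(0) = 0 for all ℓ = 1, …, M. Define α(d) := (Γ(d/2)/(π^{1/2} Γ((d−1)/2))) · ∫_{−1}^{1} |g'(y)|² (1 − y²)^{(d−3)/2} dy. Then α(d) = O(d^{−M}) as d → ∞; i.e., there exist C > 0 and d₀ such that α(d) ≤ C·d^{−M} for all d ≥ d₀. -/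
open Real Set

lemma aux_pow_le_exp (M : ℕ) {t : ℝ} (ht : 0 ≤ t) : t ^ M ≤ (M.factorial : ℝ) * Real.exp t := by
  have := _root_.Real.pow_div_factorial_le_exp (x := t) ht M
  have h : (0:ℝ) < (M.factorial:ℝ) := by positivity
  calc t ^ M = (t ^ M / (M.factorial:ℝ)) * (M.factorial:ℝ) := by field_simp
    _ ≤ Real.exp t * (M.factorial:ℝ) := by
        exact mul_le_mul_of_nonneg_right this h.le
    _ = (M.factorial : ℝ) * Real.exp t := mul_comm _ _

lemma aux_gamma_ratio {x : ℝ} (hx : 0 < x) :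
    Real.Gamma (x + 1/2) ≤ Real.Gamma x * x ^ ((1:ℝ)/2) := by
  have h1 : (0:ℝ) < x + 1 := by linarith
  have hc := Real.convexOn_log_Gamma.2 (Set.mem_Ioi.2 hx) (Set.mem_Ioi.2 h1)
    (by norm_num : (0:ℝ) ≤ (1:ℝ)/2) (by norm_num : (0:ℝ) ≤ (1:ℝ)/2) (by norm_num)
  have hmid : (1/2 : ℝ) • x + (1/2 : ℝ) • (x+1) = x + 1/2 := by simp only [smul_eq_mul]; ring
  rw [hmid] at hc
  simp only [Function.comp_apply, smul_eq_mul] at hc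
  have hgx : 0 < Real.Gamma x := Real.Gamma_pos_of_pos hx
  have hgx1 : Real.Gamma (x+1) = x * Real.Gamma x := Real.Gamma_add_one hx.ne'
  have hgm : 0 < Real.Gamma (x + 1/2) := Real.Gamma_pos_of_pos (by linarith)
  have key : Real.log (Real.Gamma (x+1/2)) ≤ Real.log (Real.Gamma x * x ^ ((1:ℝ)/2)) := by
    rw [Real.log_mul hgx.ne' (by positivity), Real.log_rpow hx]
    calc Real.log (Real.Gamma (x+1/2)) ≤ 1/2 * Real.log (Real.Gamma x)
          + 1/2 * Real.log (Real.Gamma (x+1)) := hc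
      _ = 1/2 * Real.log (Real.Gamma x) + 1/2 * (Real.log x + Real.log (Real.Gamma x)) := by
          rw [hgx1, Real.log_mul hx.ne' hgx.ne']
      _ = Real.log (Real.Gamma x) + 1/2 * Real.log x := by ring
  have := Real.exp_le_exp.2 key
  rwa [Real.exp_log hgm, Real.exp_log (by positivity)] at this

lemma aux_iteratedDerivWithin_of_isOpen {f : ℝ → ℝ} {s : Set ℝ} (n : ℕ) (hs : IsOpen s)
    {x : ℝ} (hx : x ∈ s) : iteratedDerivWithin n f s x = iteratedDeriv n f x := by
  simp only [iteratedDerivWithin, iteratedDeriv, iteratedFDerivWithin_of_isOpen n hs hx]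

lemma aux_hasDerivAt_iteratedDeriv {f : ℝ → ℝ} {U : Set ℝ} (hU : IsOpen U) {N : WithTop ℕ∞}
    (hf : ContDiffOn ℝ N f U) {n : ℕ} (hn : (n : WithTop ℕ∞) < N) {x : ℝ} (hx : x ∈ U) :
    HasDerivAt (iteratedDeriv n f) (iteratedDeriv (n+1) f x) x := by
  have hd : DifferentiableWithinAt ℝ (iteratedDerivWithin n f U) U x :=
    (hf.differentiableOn_iteratedDerivWithin hn hU.uniqueDiffOn) x hx
  have heq : iteratedDerivWithin n f U =ᶠ[nhds x] iteratedDeriv n f :=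
    Filter.eventuallyEq_of_mem (hU.mem_nhds hx)
      (fun y hy => aux_iteratedDerivWithin_of_isOpen n hU hy)
  have hd' : DifferentiableAt ℝ (iteratedDeriv n f) x :=
    (heq.differentiableAt_iff.mp (hd.differentiableAt (hU.mem_nhds hx)))
  have h2 := hd'.hasDerivAt
  have h3 : iteratedDeriv (n+1) f x = deriv (iteratedDeriv n f) x := by
    rw [iteratedDeriv_succ]
  rwa [← h3] at h2

lemma aux_continuousOn_iteratedDeriv {f : ℝ → ℝ} {U : Set ℝ} (hU : IsOpen U) {N : WithTop ℕ∞}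
    (hf : ContDiffOn ℝ N f U) {n : ℕ} (hn : (n : WithTop ℕ∞) ≤ N) :
    ContinuousOn (iteratedDeriv n f) U := by
  have := hf.continuousOn_iteratedDerivWithin hn hU.uniqueDiffOn
  exact this.congr (fun y hy => (aux_iteratedDerivWithin_of_isOpen n hU hy).symm)

lemma aux_poly_bound (g : ℝ → ℝ) (M : ℕ) (δ A : ℝ) (hδ : 0 < δ)
    (hder : ∀ n ≤ M, ∀ x ∈ Set.Icc (-δ) δ,
      HasDerivAt (iteratedDeriv n g) (iteratedDeriv (n+1) g x) x)
    (hvan : ∀ ℓ : ℕ, 1 ≤ ℓ → ℓ ≤ M → iteratedDeriv ℓ g 0 = 0)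
    (hbound : ∀ x ∈ Set.Icc (-δ) δ, |iteratedDeriv (M+1) g x| ≤ A) :
    ∀ j ≤ M, ∀ x ∈ Set.Icc (-δ) δ, |iteratedDeriv (M+1-j) g x| ≤ A * |x| ^ j := by
  intro j
  induction j with
  | zero => intro _ x hx; simpa using hbound x hx
  | succ j ih =>
    intro hj x hx
    have hjM : j ≤ M := Nat.le_of_succ_le hj
    have ihM := ih hjM
    -- f := iteratedDeriv (M - j) g, vanishing at 0
    have hMj1 : 1 ≤ M - j := by omega
    have hMjM : M - j ≤ M := by omega
    have hf0 : iteratedDeriv (M - j) g 0 = 0 := hvan _ hMj1 hMjM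
    have hsub : Set.Icc (-|x|) (|x|) ⊆ Set.Icc (-δ) δ := by
      rcases hx with ⟨h1, h2⟩
      have : |x| ≤ δ := abs_le.2 ⟨h1, h2⟩
      exact Set.Icc_subset_Icc (by linarith) this
    have key := Convex.norm_image_sub_le_of_norm_hasDerivWithin_le
      (f := iteratedDeriv (M - j) g) (f' := fun t => iteratedDeriv (M - j + 1) g t)
      (C := A * |x| ^ j) (s := Set.Icc (-|x|) (|x|))
      (fun t ht => ((hder (M - j) hMjM t (hsub ht)).hasDerivWithinAt))
      (fun t ht => by
        have h1 : |iteratedDeriv (M + 1 - j) g t| ≤ A * |t| ^ j := ihM t (hsub ht)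
        have h2 : M - j + 1 = M + 1 - j := by omega
        have h3 : |t| ≤ |x| := by
          rcases ht with ⟨ha, hb⟩; exact abs_le.2 ⟨ha, hb⟩
        have h4 : A * |t| ^ j ≤ A * |x| ^ j := by
          have hA : 0 ≤ A := le_trans (abs_nonneg _) (hbound 0 ⟨by linarith, by linarith⟩)
          exact mul_le_mul_of_nonneg_left (pow_le_pow_left₀ (abs_nonneg _) h3 j) hA
        rw [h2]
        exact le_trans h1 h4)
      (convex_Icc _ _)
      (Set.mem_Icc.2 ⟨by simp [abs_nonneg], abs_nonneg x⟩)
      (Set.mem_Icc.2 ⟨neg_abs_le x, le_abs_self x⟩)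
    have h5 : M + 1 - (j + 1) = M - j := by omega
    rw [h5]
    calc |iteratedDeriv (M - j) g x|
        = ‖iteratedDeriv (M - j) g x - iteratedDeriv (M - j) g 0‖ := by
          rw [hf0, sub_zero]; rfl
      _ ≤ A * |x| ^ j * ‖x - 0‖ := key
      _ = A * |x| ^ (j + 1) := by
          rw [sub_zero]
          show A * |x| ^ j * |x| = A * |x| ^ (j+1)
          ring

set_option maxHeartbeats 2000000 in
/-- If `g : [-1,1] → ℝ` is continuously differentiable with bounded
derivative, is `(M+2)`-times continuously differentiable on an open neighborhood `U` of `0`,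
and `g^{(ℓ)}(0) = 0` for `ℓ = 1, …, M`, then
`α(d) := (Γ(d/2)/(√π Γ((d-1)/2))) ∫_{-1}^1 |g'(y)|² (1-y²)^{(d-3)/2} dy = O(d^{-M})`. -/
theorem statement6
    (M : ℕ) (g g' : ℝ → ℝ) (C₂ : ℝ)
    (hg : ∀ y ∈ Set.Icc (-1 : ℝ) 1, HasDerivWithinAt g (g' y) (Set.Icc (-1 : ℝ) 1) y)
    (hg'cont : ContinuousOn g' (Set.Icc (-1 : ℝ) 1))
    (hC₂ : ∀ y ∈ Set.Icc (-1 : ℝ) 1, |g' y| ≤ C₂)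
    (U : Set ℝ) (hU : IsOpen U) (h0U : (0 : ℝ) ∈ U)
    (hsmooth : ContDiffOn ℝ (M + 2) g U)
    (hvanish : ∀ ℓ : ℕ, 1 ≤ ℓ → ℓ ≤ M → iteratedDeriv ℓ g 0 = 0) :
    ∃ C > (0 : ℝ), ∃ d₀ : ℕ, ∀ d : ℕ, d₀ ≤ d →
      Real.Gamma ((d : ℝ) / 2) / (Real.pi ^ ((1 : ℝ) / 2) * Real.Gamma (((d : ℝ) - 1) / 2)) *
          ∫ y in (-1 : ℝ)..1, (g' y) ^ 2 * (1 - y ^ 2) ^ (((d : ℝ) - 3) / 2) ≤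
        C * (d : ℝ) ^ (-(M : ℝ)) := by
  classical
  -- choose δ
  obtain ⟨ε, hε, hball⟩ := Metric.isOpen_iff.mp hU 0 h0U
  set δ : ℝ := min (ε/2) (1/2) with hδdef
  have hδ0 : 0 < δ := lt_min (by linarith) (by norm_num)
  have hδhalf : δ ≤ 1/2 := min_le_right _ _
  have hδ1 : δ < 1 := lt_of_le_of_lt hδhalf (by norm_num)
  have hsubU : Set.Icc (-δ) δ ⊆ U := by
    intro x hx
    apply hball
    rw [Metric.mem_ball, Real.dist_eq, sub_zero]
    have h1 : |x| ≤ δ := abs_le.2 ⟨hx.1, hx.2⟩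
    have h2 : δ ≤ ε/2 := min_le_left _ _
    linarith
  have hsubI : Set.Icc (-δ) δ ⊆ Set.Icc (-1 : ℝ) 1 :=
    Set.Icc_subset_Icc (by linarith) (by linarith)
  -- bound A on iteratedDeriv (M+1)
  have hcontMD : ContinuousOn (iteratedDeriv (M+1) g) (Set.Icc (-δ) δ) :=
    (aux_continuousOn_iteratedDeriv hU hsmooth (n := M+1) (by norm_cast; omega)).mono hsubU
  obtain ⟨A₀, hA₀⟩ := isCompact_Icc.exists_bound_of_continuousOn hcontMD
  set A : ℝ := max A₀ 0 with hAdef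
  have hA : 0 ≤ A := le_max_right _ _
  have hbound : ∀ x ∈ Set.Icc (-δ) δ, |iteratedDeriv (M+1) g x| ≤ A :=
    fun x hx => le_trans (hA₀ x hx) (le_max_left _ _)
  -- derivative chain
  have hder : ∀ n ≤ M, ∀ x ∈ Set.Icc (-δ) δ,
      HasDerivAt (iteratedDeriv n g) (iteratedDeriv (n+1) g x) x :=
    fun n hn x hx => aux_hasDerivAt_iteratedDeriv hU hsmooth
      (by norm_cast; omega) (hsubU hx)
  have hpoly := aux_poly_bound g M δ A hδ0 hder hvanish hbound M le_rfl
  -- |g' x| ≤ A |x|^M on Icc(-δ,δ)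
  have hkey : ∀ x ∈ Set.Icc (-δ) δ, |g' x| ≤ A * |x| ^ M := by
    intro x hx
    have hxI : x ∈ Set.Icc (-1:ℝ) 1 := hsubI hx
    have hIcc : Set.Icc (-1:ℝ) 1 ∈ nhds x := by
      apply Icc_mem_nhds
      · have := hx.1; linarith
      · have := hx.2; linarith
    have hda : HasDerivAt g (g' x) x := (hg x hxI).hasDerivAt hIcc
    have heq : g' x = iteratedDeriv 1 g x := by
      rw [iteratedDeriv_one]
      exact (hda.deriv).symm
    have := hpoly x hx
    rw [show M + 1 - M = 1 by omega] at this
    rwa [heq]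
  have hC₂0 : 0 ≤ C₂ := le_trans (abs_nonneg _) (hC₂ 0 ⟨by norm_num, by norm_num⟩)
  -- geometric constant
  set s : ℝ := Real.sqrt (1 - δ^2) with hsdef
  have h1δ : 0 < 1 - δ^2 := by nlinarith
  have hs0 : 0 < s := Real.sqrt_pos.2 h1δ
  have hs1 : s < 1 := by
    have hδ2 : 0 < δ^2 := pow_pos hδ0 2
    have h := Real.sqrt_lt_sqrt (show (0:ℝ) ≤ 1 - δ^2 by linarith) (show 1-δ^2 < 1 by linarith)
    simpa using h
  have hsq : s^2 = 1 - δ^2 := Real.sq_sqrt h1δ.le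
  -- eventual geometric decay
  have htend : Filter.Tendsto (fun n : ℕ => (n:ℝ) ^ (M+1) * s ^ n) Filter.atTop (nhds 0) :=
    tendsto_pow_const_mul_const_pow_of_lt_one (M+1) hs0.le hs1
  obtain ⟨d₁, hd₁⟩ := Filter.eventually_atTop.mp (htend.eventually (gt_mem_nhds (pow_pos hs0 3)))
  -- constants
  set c1 : ℝ := A^2 * (M.factorial : ℝ) * 8^M * Real.sqrt (8*Real.pi) with hc1def
  have hc1 : 0 ≤ c1 := by positivity
  refine ⟨c1 + 2*C₂^2 + 1, by positivity, max d₁ 7, ?_⟩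
  intro d hd
  have hd7 : 7 ≤ d := le_trans (le_max_right _ _) hd
  have hdd1 : d₁ ≤ d := le_trans (le_max_left _ _) hd
  have hd0 : (0:ℝ) < d := by positivity
  have hd1R : (1:ℝ) ≤ d := by have h : 1 ≤ d := by omega
                              exact_mod_cast h
  set p : ℝ := ((d:ℝ) - 3)/2 with hpdef
  have hdR : (7:ℝ) ≤ (d:ℝ) := by exact_mod_cast hd7
  have hp2 : 2 ≤ p := by rw [hpdef]; linarith
  have hp0 : 0 < p := by linarith
  have hp4 : (d:ℝ)/4 ≤ p := by rw [hpdef]; linarith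
  -- pointwise bound of the integrand
  have hptwise : ∀ y ∈ Set.Icc (-1:ℝ) 1,
      (g' y)^2 * (1 - y^2) ^ p ≤
        A^2 * y^(2*M) * Real.exp (-(p * y^2)) + C₂^2 * (1-δ^2) ^ p := by
    intro y hy
    have hy2 : 0 ≤ 1 - y^2 := by nlinarith [hy.1, hy.2]
    have hy0 : 0 ≤ y^(2*M) := by rw [pow_mul]; positivity
    have hT1 : 0 ≤ A^2 * y^(2*M) * Real.exp (-(p * y^2)) := by positivity
    have hT2 : 0 ≤ C₂^2 * (1-δ^2) ^ p := by
      have := Real.rpow_nonneg h1δ.le p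
      positivity
    rcases le_or_gt |y| δ with hc | hc
    · have hyδ : y ∈ Set.Icc (-δ) δ := by
        have := abs_le.1 hc; exact ⟨this.1, this.2⟩
      have h1 : |g' y| ≤ A * |y|^M := hkey y hyδ
      have h2 : (g' y)^2 ≤ (A*|y|^M)^2 := by
        rw [← sq_abs (g' y)]
        exact pow_le_pow_left₀ (abs_nonneg _) h1 2
      have h3 : (A*|y|^M)^2 = A^2 * y^(2*M) := by
        have : (A*|y|^M)^2 = A^2 * (|y|^2)^M := by ring
        rw [this, sq_abs, ← pow_mul]
      have h4 : (1-y^2)^p ≤ Real.exp (-(p*y^2)) := by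
        have h5 := Real.add_one_le_exp (-y^2)
        calc (1-y^2)^p ≤ (Real.exp (-y^2))^p :=
              Real.rpow_le_rpow hy2 (by linarith) hp0.le
          _ = Real.exp (-y^2 * p) := (Real.exp_mul _ _).symm
          _ = Real.exp (-(p*y^2)) := by ring_nf
      have h6 : (g' y)^2 * (1-y^2)^p ≤ A^2*y^(2*M) * Real.exp (-(p*y^2)) := by
        exact mul_le_mul (h2.trans h3.le) h4 (Real.rpow_nonneg hy2 p) (by positivity)
      linarith
    · have h1 : (g' y)^2 ≤ C₂^2 := by
        rw [← sq_abs (g' y)]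
        exact pow_le_pow_left₀ (abs_nonneg _) (hC₂ y hy) 2
      have hδy : δ^2 ≤ y^2 := by
        have := pow_le_pow_left₀ hδ0.le hc.le 2
        rwa [sq_abs] at this
      have h2 : (1-y^2)^p ≤ (1-δ^2)^p :=
        Real.rpow_le_rpow hy2 (by linarith) hp0.le
      have h3 : (g' y)^2 * (1-y^2)^p ≤ C₂^2 * (1-δ^2)^p :=
        mul_le_mul h1 h2 (Real.rpow_nonneg hy2 p) (sq_nonneg C₂)
      linarith
  -- integral bound
  have hIbound : (∫ y in (-1:ℝ)..1, (g' y)^2 * (1 - y^2) ^ p) ≤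
      A^2 * (M.factorial : ℝ) * (2/p)^M * Real.sqrt (Real.pi / (p/2))
        + 2 * (C₂^2 * (1-δ^2) ^ p) := by
    have huIcc : Set.uIcc (-1:ℝ) 1 = Set.Icc (-1:ℝ) 1 := Set.uIcc_of_le (by norm_num)
    have hp20 : (0:ℝ) < p/2 := by linarith
    have hcontrp : ContinuousOn (fun y : ℝ => (1 - y^2) ^ p) (Set.Icc (-1:ℝ) 1) := by
      apply ContinuousOn.rpow_const
      · exact (continuous_const.sub (continuous_pow 2)).continuousOn
      · exact fun x _ => Or.inr hp0.le
    have hint1 : IntervalIntegrable (fun y => (g' y)^2 * (1 - y^2) ^ p)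
        MeasureTheory.volume (-1) 1 := by
      apply ContinuousOn.intervalIntegrable
      rw [huIcc]
      exact (hg'cont.pow 2).mul hcontrp
    have hcontB : Continuous (fun y : ℝ => A^2 * y^(2*M) * Real.exp (-(p * y^2))) := by
      apply Continuous.mul
      · exact continuous_const.mul (continuous_pow _)
      · exact Real.continuous_exp.comp ((continuous_const.mul (continuous_pow 2)).neg)
    have hint2a : IntervalIntegrable (fun y : ℝ => A^2 * y^(2*M) * Real.exp (-(p * y^2)))
        MeasureTheory.volume (-1) 1 := hcontB.intervalIntegrable (-1 : ℝ) 1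
    have hint2b : IntervalIntegrable (fun _ : ℝ => C₂^2 * (1-δ^2) ^ p)
        MeasureTheory.volume (-1) 1 := intervalIntegrable_const
    have hstep1 : (∫ y in (-1:ℝ)..1, (g' y)^2 * (1 - y^2) ^ p) ≤
        ∫ y in (-1:ℝ)..1, (A^2 * y^(2*M) * Real.exp (-(p * y^2)) + C₂^2 * (1-δ^2) ^ p) :=
      intervalIntegral.integral_mono_on (by norm_num) hint1 (hint2a.add hint2b) hptwise
    have hstep2 : (∫ y in (-1:ℝ)..1, (A^2 * y^(2*M) * Real.exp (-(p * y^2))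
          + C₂^2 * (1-δ^2) ^ p)) =
        A^2 * (∫ y in (-1:ℝ)..1, y^(2*M) * Real.exp (-(p * y^2)))
          + 2 * (C₂^2 * (1-δ^2) ^ p) := by
      rw [intervalIntegral.integral_add hint2a hint2b, intervalIntegral.integral_const]
      simp only [mul_assoc]
      rw [intervalIntegral.integral_const_mul]
      norm_num
    -- pointwise core bound
    have hcore : ∀ y : ℝ, y^(2*M) * Real.exp (-(p*y^2)) ≤
        (M.factorial:ℝ) * (2/p)^M * Real.exp (-(p/2) * y^2) := by
      intro y
      have ht := aux_pow_le_exp M (t := p*y^2/2) (by positivity)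
      have hfac : (p*y^2/2)^M = (p/2)^M * (y^2)^M := by
        rw [show p*y^2/2 = (p/2)*y^2 by ring, mul_pow]
      rw [hfac] at ht
      have h1 : (y^2)^M ≤ (M.factorial:ℝ) * (2/p)^M * Real.exp (p*y^2/2) := by
        calc (y^2)^M = ((p/2)^M * (y^2)^M) * (2/p)^M := by
              rw [mul_assoc, mul_comm ((y^2)^M), ← mul_assoc, ← mul_pow]
              field_simp
              rw [one_pow, mul_one]
          _ ≤ ((M.factorial:ℝ) * Real.exp (p*y^2/2)) * (2/p)^M :=
              mul_le_mul_of_nonneg_right ht (by positivity)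
          _ = (M.factorial:ℝ) * (2/p)^M * Real.exp (p*y^2/2) := by ring
      have hexp : Real.exp (p*y^2/2) * Real.exp (-(p*y^2)) = Real.exp (-(p/2) * y^2) := by
        rw [← Real.exp_add]; ring_nf
      calc y^(2*M) * Real.exp (-(p*y^2)) = (y^2)^M * Real.exp (-(p*y^2)) := by
            rw [pow_mul]
        _ ≤ ((M.factorial:ℝ) * (2/p)^M * Real.exp (p*y^2/2)) * Real.exp (-(p*y^2)) :=
            mul_le_mul_of_nonneg_right h1 (Real.exp_pos _).le
        _ = (M.factorial:ℝ) * (2/p)^M * (Real.exp (p*y^2/2) * Real.exp (-(p*y^2))) := by ring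
        _ = (M.factorial:ℝ) * (2/p)^M * Real.exp (-(p/2) * y^2) := by rw [hexp]
    have hcontJ : Continuous (fun y : ℝ => y^(2*M) * Real.exp (-(p * y^2))) := by
      apply Continuous.mul (continuous_pow _)
      exact Real.continuous_exp.comp ((continuous_const.mul (continuous_pow 2)).neg)
    have hcontG : Continuous (fun y : ℝ => Real.exp (-(p/2) * y^2)) := by
      exact Real.continuous_exp.comp ((continuous_const.neg).mul (continuous_pow 2))
    have hJ : (∫ y in (-1:ℝ)..1, y^(2*M) * Real.exp (-(p * y^2))) ≤
        (M.factorial:ℝ) * (2/p)^M * ∫ y in (-1:ℝ)..1, Real.exp (-(p/2) * y^2) := by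
      calc (∫ y in (-1:ℝ)..1, y^(2*M) * Real.exp (-(p * y^2)))
          ≤ ∫ y in (-1:ℝ)..1, (M.factorial:ℝ) * (2/p)^M * Real.exp (-(p/2) * y^2) :=
            intervalIntegral.integral_mono_on (by norm_num) (hcontJ.intervalIntegrable _ _)
              ((continuous_const.mul hcontG).intervalIntegrable _ _)
              (fun y _ => hcore y)
        _ = (M.factorial:ℝ) * (2/p)^M * ∫ y in (-1:ℝ)..1, Real.exp (-(p/2) * y^2) := by
            rw [intervalIntegral.integral_const_mul]
    have hG : (∫ y in (-1:ℝ)..1, Real.exp (-(p/2) * y^2)) ≤ Real.sqrt (Real.pi/(p/2)) := by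
      rw [intervalIntegral.integral_of_le (by norm_num : (-1:ℝ) ≤ 1)]
      have hint := integrable_exp_neg_mul_sq hp20
      calc (∫ y in Set.Ioc (-1:ℝ) 1, Real.exp (-(p/2) * y^2))
          ≤ ∫ y : ℝ, Real.exp (-(p/2) * y^2) :=
            MeasureTheory.setIntegral_le_integral hint
              (Filter.Eventually.of_forall fun x => (Real.exp_pos _).le)
        _ = Real.sqrt (Real.pi/(p/2)) := integral_gaussian (p/2)
    calc (∫ y in (-1:ℝ)..1, (g' y)^2 * (1 - y^2) ^ p)
        ≤ A^2 * (∫ y in (-1:ℝ)..1, y^(2*M) * Real.exp (-(p * y^2)))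
            + 2 * (C₂^2 * (1-δ^2) ^ p) := by rw [← hstep2]; exact hstep1
      _ ≤ A^2 * ((M.factorial:ℝ) * (2/p)^M * Real.sqrt (Real.pi/(p/2)))
            + 2 * (C₂^2 * (1-δ^2) ^ p) := by
          refine add_le_add ?_ le_rfl
          apply mul_le_mul_of_nonneg_left _ (sq_nonneg A)
          exact hJ.trans (mul_le_mul_of_nonneg_left hG (by positivity))
      _ = A^2 * (M.factorial : ℝ) * (2/p)^M * Real.sqrt (Real.pi / (p/2))
            + 2 * (C₂^2 * (1-δ^2) ^ p) := by ring
  -- Gamma ratio bound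
  have hR : Real.Gamma ((d : ℝ) / 2) / (Real.pi ^ ((1 : ℝ) / 2) * Real.Gamma (((d : ℝ) - 1) / 2))
      ≤ Real.sqrt d := by
    set x : ℝ := ((d:ℝ)-1)/2 with hxdef
    have hx : 0 < x := by rw [hxdef]; linarith
    have hgx : 0 < Real.Gamma x := Real.Gamma_pos_of_pos hx
    have hratio := aux_gamma_ratio hx
    have hx12 : x + 1/2 = (d:ℝ)/2 := by rw [hxdef]; ring
    rw [hx12] at hratio
    have hxd : x ^ ((1:ℝ)/2) ≤ Real.sqrt d := by
      rw [← Real.sqrt_eq_rpow]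
      exact Real.sqrt_le_sqrt (by rw [hxdef]; linarith)
    have h1 : Real.Gamma ((d:ℝ)/2) ≤ Real.Gamma x * Real.sqrt d :=
      hratio.trans (mul_le_mul_of_nonneg_left hxd hgx.le)
    have hπ : (1:ℝ) ≤ Real.pi ^ ((1:ℝ)/2) := by
      have hpi1 : (1:ℝ) ≤ Real.pi := by linarith [Real.pi_gt_three]
      calc (1:ℝ) = (1:ℝ) ^ ((1:ℝ)/2) := (Real.one_rpow _).symm
        _ ≤ Real.pi ^ ((1:ℝ)/2) := Real.rpow_le_rpow (by norm_num) hpi1 (by norm_num)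
    have hden : 0 < Real.pi ^ ((1:ℝ)/2) * Real.Gamma x := by
      have := Real.rpow_pos_of_pos Real.pi_pos ((1:ℝ)/2)
      positivity
    rw [div_le_iff₀ hden]
    calc Real.Gamma ((d:ℝ)/2) ≤ Real.Gamma x * Real.sqrt d := h1
      _ ≤ Real.sqrt d * (Real.pi ^ ((1:ℝ)/2) * Real.Gamma x) := by
        rw [mul_comm]
        apply mul_le_mul_of_nonneg_left _ (Real.sqrt_nonneg _)
        nlinarith [hgx, hπ]
  -- nonnegativity of the integral
  have hInonneg : 0 ≤ ∫ y in (-1:ℝ)..1, (g' y)^2 * (1 - y^2) ^ p := by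
    apply intervalIntegral.integral_nonneg (by norm_num)
    intro y hy
    have hy2 : 0 ≤ 1 - y^2 := by nlinarith [hy.1, hy.2]
    exact mul_nonneg (sq_nonneg _) (Real.rpow_nonneg hy2 p)
  -- tail bound
  have htail : Real.sqrt d * (2 * (C₂^2 * (1-δ^2) ^ p)) ≤ (2*C₂^2 + 1) * ((d:ℝ)^M)⁻¹ := by
    have hdM : (0:ℝ) < (d:ℝ)^M := by positivity
    have hdM1 : (0:ℝ) < (d:ℝ)^(M+1) := by positivity
    -- rewrite (1-δ²)^p as s^(d-3)
    have hcast : ((d - 3 : ℕ) : ℝ) = (d:ℝ) - 3 := by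
      have : (3:ℕ) ≤ d := by omega
      push_cast [Nat.cast_sub this]
      ring
    have hrw1 : (1-δ^2) ^ p = s ^ (d - 3) := by
      have h2p : 2 * p = (d:ℝ) - 3 := by rw [hpdef]; ring
      calc (1-δ^2) ^ p = (s^(2:ℝ)) ^ p := by
            rw [← hsq, ← Real.rpow_natCast s 2]; norm_num
        _ = s ^ (2*p) := (Real.rpow_mul hs0.le 2 p).symm
        _ = s ^ ((d:ℝ)-3) := by rw [h2p]
        _ = s ^ (((d-3:ℕ)):ℝ) := by rw [hcast]
        _ = s ^ (d-3) := Real.rpow_natCast s (d-3)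
    have hgeo := hd₁ d hdd1
    have hsd : s ^ d = s ^ (d-3) * s^3 := by rw [← pow_add]; congr 1; omega
    have hs3 : (0:ℝ) < s^3 := pow_pos hs0 3
    rw [hsd] at hgeo
    have h4 : s^(d-3) ≤ ((d:ℝ)^(M+1))⁻¹ := by
      rw [inv_eq_one_div, le_div_iff₀ hdM1]
      nlinarith [pow_nonneg hs0.le (d-3)]
    have hsqd : Real.sqrt d ≤ (d:ℝ) := by
      have h := Real.sqrt_le_sqrt (show (d:ℝ) ≤ ((d:ℝ))^2 by nlinarith)
      rwa [Real.sqrt_sq hd0.le] at h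
    calc Real.sqrt d * (2*(C₂^2*(1-δ^2)^p)) = 2*C₂^2 * (Real.sqrt d * s^(d-3)) := by
          rw [hrw1]; ring
      _ ≤ 2*C₂^2 * ((d:ℝ) * ((d:ℝ)^(M+1))⁻¹) := by
          apply mul_le_mul_of_nonneg_left _ (by positivity)
          exact mul_le_mul hsqd h4 (pow_nonneg hs0.le _) hd0.le
      _ = 2*C₂^2 * ((d:ℝ)^M)⁻¹ := by
          congr 1
          rw [pow_succ]
          field_simp
      _ ≤ (2*C₂^2+1) * ((d:ℝ)^M)⁻¹ := by
          apply mul_le_mul_of_nonneg_right (by linarith) (by positivity)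
  -- main term bound
  have hmain : Real.sqrt d * (A^2 * (M.factorial : ℝ) * (2/p)^M * Real.sqrt (Real.pi / (p/2)))
      ≤ c1 * ((d:ℝ)^M)⁻¹ := by
    have hp20 : (0:ℝ) < p/2 := by linarith
    have h2p8d : 2/p ≤ 8/(d:ℝ) := by
      rw [div_le_div_iff₀ hp0 hd0]; nlinarith [hp4]
    have hpow : (2/p)^M ≤ (8/(d:ℝ))^M := pow_le_pow_left₀ (by positivity) h2p8d M
    have hsq2 : Real.sqrt (Real.pi/(p/2)) ≤ Real.sqrt (8*Real.pi/(d:ℝ)) := by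
      apply Real.sqrt_le_sqrt
      rw [div_le_div_iff₀ hp20 hd0]
      nlinarith [Real.pi_pos, hp4]
    have hsqdiv : Real.sqrt (8*Real.pi/(d:ℝ)) = Real.sqrt (8*Real.pi)/Real.sqrt d :=
      Real.sqrt_div (by positivity) d
    have hsd0 : Real.sqrt d ≠ 0 := (Real.sqrt_pos.2 hd0).ne'
    have hdM0 : ((d:ℝ)^M) ≠ 0 := by positivity
    calc Real.sqrt d * (A^2 * (M.factorial : ℝ) * (2/p)^M * Real.sqrt (Real.pi / (p/2)))
        ≤ Real.sqrt d * (A^2 * (M.factorial : ℝ) * (8/(d:ℝ))^M *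
            (Real.sqrt (8*Real.pi)/Real.sqrt d)) := by
          apply mul_le_mul_of_nonneg_left _ (Real.sqrt_nonneg _)
          apply mul_le_mul
          · exact mul_le_mul_of_nonneg_left hpow (by positivity)
          · exact hsq2.trans_eq hsqdiv
          · exact Real.sqrt_nonneg _
          · positivity
      _ = c1 * ((d:ℝ)^M)⁻¹ := by
          rw [hc1def, div_pow]
          field_simp
  -- combine
  have hcomb : Real.Gamma ((d : ℝ) / 2) / (Real.pi ^ ((1 : ℝ) / 2) * Real.Gamma (((d : ℝ) - 1) / 2)) *
      (∫ y in (-1:ℝ)..1, (g' y)^2 * (1 - y^2) ^ p) ≤ (c1 + 2*C₂^2 + 1) * ((d:ℝ)^M)⁻¹ := by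
    have hR0 : 0 ≤ Real.Gamma ((d : ℝ) / 2) /
        (Real.pi ^ ((1 : ℝ) / 2) * Real.Gamma (((d : ℝ) - 1) / 2)) := by
      have h1 : 0 < Real.Gamma ((d:ℝ)/2) := Real.Gamma_pos_of_pos (by linarith)
      have h2 : 0 < Real.Gamma (((d:ℝ)-1)/2) := Real.Gamma_pos_of_pos (by linarith)
      have h3 : (0:ℝ) < Real.pi ^ ((1:ℝ)/2) := Real.rpow_pos_of_pos Real.pi_pos _
      positivity
    calc Real.Gamma ((d : ℝ) / 2) / (Real.pi ^ ((1 : ℝ) / 2) * Real.Gamma (((d : ℝ) - 1) / 2)) *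
        (∫ y in (-1:ℝ)..1, (g' y)^2 * (1 - y^2) ^ p)
        ≤ Real.sqrt d * (A^2 * (M.factorial : ℝ) * (2/p)^M * Real.sqrt (Real.pi / (p/2))
            + 2 * (C₂^2 * (1-δ^2) ^ p)) := by
          apply mul_le_mul hR hIbound hInonneg (Real.sqrt_nonneg _)
      _ = Real.sqrt d * (A^2 * (M.factorial : ℝ) * (2/p)^M * Real.sqrt (Real.pi / (p/2)))
            + Real.sqrt d * (2 * (C₂^2 * (1-δ^2) ^ p)) := by ring
      _ ≤ c1 * ((d:ℝ)^M)⁻¹ + (2*C₂^2 + 1) * ((d:ℝ)^M)⁻¹ := add_le_add hmain htail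
      _ = (c1 + 2*C₂^2 + 1) * ((d:ℝ)^M)⁻¹ := by ring
  have hrw : (d:ℝ) ^ (-(M:ℝ)) = ((d:ℝ)^M)⁻¹ := by
    rw [Real.rpow_neg hd0.le, Real.rpow_natCast]
  rw [hrw]
  exact hcomb
end

section
/- Let B and B̂ be n×m real matrices admitting decompositions B = U₁Σ₁V₁^T + U₂Σ₂V₂^T and B̂ = Û₁Σ̂₁V̂₁^T + Û₂Σ̂₂V̂₂^T, where [U₁ U₂] and [V₁ V₂] (and likewise [Û₁ Û₂], [V̂₁ V̂₂]) have orthonormal columns, U₁, Û₁ have p columns, and Σ₁, Σ₂, Σ̂₁, Σ̂₂ are diagonal matrices with nonnegative diagonal entries (singular values). Suppose there is ᾱ > 0 such that every diagonal entry σ of Σ̂₁ and every diagonal entry τ of Σ₂ satisfy |σ − τ| ≥ ᾱ, and every diagonal entry σ of Σ̂₁ satisfies σ ≥ ᾱ. Then ‖ V₁V₁^T − V̂₁V̂₁^T ‖_F ≤ (2/ᾱ)·‖ B − B̂ ‖_F. -/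
open Matrix

/-- The Frobenius norm of a matrix. -/
noncomputable def frobNorm {n m : ℕ} (M : Matrix (Fin n) (Fin m) ℝ) : ℝ :=
  Real.sqrt (∑ i, ∑ j, M i j ^ 2)

noncomputable def fsq {k l : ℕ} (M : Matrix (Fin k) (Fin l) ℝ) : ℝ := ∑ i, ∑ j, M i j ^ 2

lemma fsq_nonneg {k l : ℕ} (M : Matrix (Fin k) (Fin l) ℝ) : 0 ≤ fsq M :=
  Finset.sum_nonneg fun _ _ => Finset.sum_nonneg fun _ _ => sq_nonneg _

lemma fsq_eq_trace {k l : ℕ} (M : Matrix (Fin k) (Fin l) ℝ) : fsq M = trace (Mᵀ * M) := by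
  simp [fsq, trace, Matrix.mul_apply, Matrix.diag, sq]
  exact Finset.sum_comm

lemma fsq_transpose {k l : ℕ} (M : Matrix (Fin k) (Fin l) ℝ) : fsq Mᵀ = fsq M := by
  simp [fsq, Matrix.transpose_apply]
  exact Finset.sum_comm

lemma fsq_neg {k l : ℕ} (M : Matrix (Fin k) (Fin l) ℝ) : fsq (-M) = fsq M := by
  simp [fsq]

lemma fsq_mul_trace {k q mm : ℕ} (N : Matrix (Fin k) (Fin mm) ℝ)
    (W : Matrix (Fin mm) (Fin q) ℝ) :
    fsq (N * W) = trace (Nᵀ * N * (W * Wᵀ)) := by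
  rw [fsq_eq_trace, transpose_mul]
  rw [show Wᵀ * Nᵀ * (N * W) = Wᵀ * (Nᵀ * N * W) by simp [Matrix.mul_assoc]]
  rw [trace_mul_comm]
  simp [Matrix.mul_assoc]

lemma fsq_mul_sym_idem {k mm : ℕ} (N : Matrix (Fin k) (Fin mm) ℝ)
    (Q : Matrix (Fin mm) (Fin mm) ℝ) (hs : Qᵀ = Q) (hi : Q * Q = Q) :
    fsq (N * Q) = trace (Nᵀ * N * Q) := by
  rw [fsq_eq_trace, transpose_mul, hs]
  rw [show Q * Nᵀ * (N * Q) = Q * (Nᵀ * N * Q) by simp [Matrix.mul_assoc]]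
  rw [trace_mul_comm]
  rw [Matrix.mul_assoc, hi]

lemma fsq_mul_le {k q mm : ℕ} (N : Matrix (Fin k) (Fin mm) ℝ)
    (W : Matrix (Fin mm) (Fin q) ℝ) (hW : Wᵀ * W = 1) :
    fsq (N * W) ≤ fsq N := by
  have hP : (W * Wᵀ) * (W * Wᵀ) = W * Wᵀ := by
    rw [Matrix.mul_assoc, ← Matrix.mul_assoc Wᵀ, hW, Matrix.one_mul]
  have hQs : (1 - W * Wᵀ)ᵀ = 1 - W * Wᵀ := by simp [transpose_sub]
  have hQi : (1 - W * Wᵀ) * (1 - W * Wᵀ) = 1 - W * Wᵀ := by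
    simp [Matrix.sub_mul, Matrix.mul_sub, hP]
  have h1 := fsq_mul_trace N W
  have h2 := fsq_mul_sym_idem N (1 - W * Wᵀ) hQs hQi
  have h3 : trace (Nᵀ * N * (W * Wᵀ)) + trace (Nᵀ * N * (1 - W * Wᵀ)) = fsq N := by
    rw [fsq_eq_trace, ← trace_add, ← Matrix.mul_add]
    simp
  nlinarith [fsq_nonneg (N * (1 - W * Wᵀ)), fsq_nonneg (N * W)]

lemma fsq_decomp {k q q₂ mm : ℕ} (N : Matrix (Fin k) (Fin mm) ℝ)
    (W₁ : Matrix (Fin mm) (Fin q) ℝ) (W₂ : Matrix (Fin mm) (Fin q₂) ℝ)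
    (h1 : W₁ᵀ * W₁ = 1) (h2 : W₂ᵀ * W₂ = 1) (h12 : W₁ᵀ * W₂ = 0) :
    fsq N = fsq (N * W₁) + fsq (N * W₂) + fsq (N * (1 - W₁ * W₁ᵀ - W₂ * W₂ᵀ)) := by
  set Q : Matrix (Fin mm) (Fin mm) ℝ := 1 - W₁ * W₁ᵀ - W₂ * W₂ᵀ with hQ
  have h21 : W₂ᵀ * W₁ = 0 := by
    have := congrArg transpose h12; simpa using this
  have hP1 : (W₁ * W₁ᵀ) * (W₁ * W₁ᵀ) = W₁ * W₁ᵀ := by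
    rw [Matrix.mul_assoc, ← Matrix.mul_assoc W₁ᵀ, h1, Matrix.one_mul]
  have hP2 : (W₂ * W₂ᵀ) * (W₂ * W₂ᵀ) = W₂ * W₂ᵀ := by
    rw [Matrix.mul_assoc, ← Matrix.mul_assoc W₂ᵀ, h2, Matrix.one_mul]
  have hP12 : (W₁ * W₁ᵀ) * (W₂ * W₂ᵀ) = 0 := by
    rw [Matrix.mul_assoc, ← Matrix.mul_assoc W₁ᵀ, h12]; simp
  have hP21 : (W₂ * W₂ᵀ) * (W₁ * W₁ᵀ) = 0 := by
    rw [Matrix.mul_assoc, ← Matrix.mul_assoc W₂ᵀ, h21]; simp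
  have hQs : Qᵀ = Q := by simp [hQ, transpose_sub]
  have hQi : Q * Q = Q := by
    simp only [hQ, Matrix.sub_mul, Matrix.mul_sub, Matrix.one_mul, Matrix.mul_one,
      hP1, hP2, hP12, hP21]
    abel
  rw [fsq_mul_trace N W₁, fsq_mul_trace N W₂, fsq_mul_sym_idem N Q hQs hQi]
  rw [← trace_add, ← trace_add, ← Matrix.mul_add, ← Matrix.mul_add]
  rw [show W₁ * W₁ᵀ + W₂ * W₂ᵀ + Q = 1 by rw [hQ]; abel]
  rw [Matrix.mul_one, fsq_eq_trace]

lemma scalar1 (a s t x y e f : ℝ) (ha : 0 < a) (ht : 0 ≤ t)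
    (hsep : a ≤ |s - t|) (hs0 : a ≤ s)
    (h1 : x * s - t * y = e) (h2 : t * x - y * s = f) :
    a ^ 2 * x ^ 2 ≤ e ^ 2 + f ^ 2 := by
  have hs : 0 ≤ s := le_trans ha.le hs0
  have hd : a ^ 2 ≤ (s - t) ^ 2 := by
    have := pow_le_pow_left₀ ha.le hsep 2
    rwa [sq_abs] at this
  have hst : 0 < s + t := lt_of_lt_of_le ha (by linarith)
  have key : x * (s ^ 2 - t ^ 2) = s * e - t * f := by linear_combination s * h1 - t * h2
  have h3 : (x * (s ^ 2 - t ^ 2)) ^ 2 ≤ (s + t) ^ 2 * (e ^ 2 + f ^ 2) := by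
    rw [key]
    nlinarith [sq_nonneg (s * f + t * e), mul_nonneg hs ht, sq_nonneg e, sq_nonneg f,
      mul_nonneg (mul_nonneg hs ht) (add_nonneg (sq_nonneg e) (sq_nonneg f))]
  have h4 : a ^ 2 * (s + t) ^ 2 * x ^ 2 ≤ (x * (s ^ 2 - t ^ 2)) ^ 2 := by
    have := mul_le_mul_of_nonneg_right hd (by positivity : (0:ℝ) ≤ x ^ 2 * (s + t) ^ 2)
    nlinarith [this]
  nlinarith [h3, h4, mul_pos hst hst, sq_nonneg x, mul_pos (mul_pos hst hst) (mul_pos ha ha)]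

lemma scalar2 (a s x g : ℝ) (ha : 0 < a) (hs0 : a ≤ s) (h : x * s = g) :
    a ^ 2 * x ^ 2 ≤ g ^ 2 := by
  have h2 : a ^ 2 ≤ s ^ 2 := by nlinarith
  have := mul_le_mul_of_nonneg_right h2 (sq_nonneg x)
  have h3 : g ^ 2 = s ^ 2 * x ^ 2 := by rw [← h]; ring
  linarith


set_option maxHeartbeats 1000000 in
/-- Wedin's bound, stability of invariant subspaces of the SVD.
If `B = U₁ Σ₁ V₁ᵀ + U₂ Σ₂ V₂ᵀ` and `B̂ = Û₁ Σ̂₁ V̂₁ᵀ + Û₂ Σ̂₂ V̂₂ᵀ` with `[U₁ U₂]`, `[V₁ V₂]`,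
`[Û₁ Û₂]`, `[V̂₁ V̂₂]` having orthonormal columns and nonnegative diagonal `Σ`'s, and if each
singular value of `Σ̂₁` is at least `ᾱ` and is at distance at least `ᾱ` from each singular
value of `Σ₂`, then `‖V₁V₁ᵀ - V̂₁V̂₁ᵀ‖_F ≤ (2/ᾱ) ‖B - B̂‖_F`. -/
theorem statement12
    (n m p p₂ : ℕ) (B Bh : Matrix (Fin n) (Fin m) ℝ)
    (U₁ Uh₁ : Matrix (Fin n) (Fin p) ℝ) (U₂ Uh₂ : Matrix (Fin n) (Fin p₂) ℝ)
    (V₁ Vh₁ : Matrix (Fin m) (Fin p) ℝ) (V₂ Vh₂ : Matrix (Fin m) (Fin p₂) ℝ)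
    (σ₁ σh₁ : Fin p → ℝ) (σ₂ σh₂ : Fin p₂ → ℝ)
    -- orthonormal columns of `[U₁ U₂]`, `[V₁ V₂]`, `[Û₁ Û₂]`, `[V̂₁ V̂₂]`
    (hU : U₁ᵀ * U₁ = 1 ∧ U₂ᵀ * U₂ = 1 ∧ U₁ᵀ * U₂ = 0)
    (hV : V₁ᵀ * V₁ = 1 ∧ V₂ᵀ * V₂ = 1 ∧ V₁ᵀ * V₂ = 0)
    (hUh : Uh₁ᵀ * Uh₁ = 1 ∧ Uh₂ᵀ * Uh₂ = 1 ∧ Uh₁ᵀ * Uh₂ = 0)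
    (hVh : Vh₁ᵀ * Vh₁ = 1 ∧ Vh₂ᵀ * Vh₂ = 1 ∧ Vh₁ᵀ * Vh₂ = 0)
    -- nonnegative singular values
    (hσ₁ : ∀ i, 0 ≤ σ₁ i) (hσ₂ : ∀ i, 0 ≤ σ₂ i) (hσh₁ : ∀ i, 0 ≤ σh₁ i)
    (hσh₂ : ∀ i, 0 ≤ σh₂ i)
    -- the singular value decompositions
    (hB : B = U₁ * diagonal σ₁ * V₁ᵀ + U₂ * diagonal σ₂ * V₂ᵀ)
    (hBh : Bh = Uh₁ * diagonal σh₁ * Vh₁ᵀ + Uh₂ * diagonal σh₂ * Vh₂ᵀ)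
    -- the separation conditions
    (αb : ℝ) (hαb : 0 < αb)
    (hsep : ∀ (i : Fin p) (j : Fin p₂), αb ≤ |σh₁ i - σ₂ j|)
    (hsep0 : ∀ i : Fin p, αb ≤ σh₁ i) :
    frobNorm (V₁ * V₁ᵀ - Vh₁ * Vh₁ᵀ) ≤ 2 / αb * frobNorm (B - Bh) := by
  obtain ⟨hU1, hU2, hU12⟩ := hU
  obtain ⟨hV1, hV2, hV12⟩ := hV
  obtain ⟨hUh1, hUh2, hUh12⟩ := hUh
  obtain ⟨hVh1, hVh2, hVh12⟩ := hVh
  have hV21 : V₂ᵀ * V₁ = 0 := by have := congrArg transpose hV12; simpa using this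
  have hU21 : U₂ᵀ * U₁ = 0 := by have := congrArg transpose hU12; simpa using this
  have hUh21 : Uh₂ᵀ * Uh₁ = 0 := by have := congrArg transpose hUh12; simpa using this
  have hVh21 : Vh₂ᵀ * Vh₁ = 0 := by have := congrArg transpose hVh12; simpa using this
  set Q : Matrix (Fin m) (Fin m) ℝ := 1 - V₁ * V₁ᵀ - V₂ * V₂ᵀ with hQdef
  have hQV1 : Q * V₁ = 0 := by
    rw [hQdef, Matrix.sub_mul, Matrix.sub_mul, Matrix.one_mul,
      Matrix.mul_assoc V₁, hV1, Matrix.mul_assoc V₂, hV21]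
    simp
  have hQV2 : Q * V₂ = 0 := by
    rw [hQdef, Matrix.sub_mul, Matrix.sub_mul, Matrix.one_mul,
      Matrix.mul_assoc V₁, hV12, Matrix.mul_assoc V₂, hV2]
    simp
  have hQs : Qᵀ = Q := by rw [hQdef]; simp [transpose_sub]
  -- absorbing lemmas
  have aV21 : ∀ {q : ℕ} (M : Matrix (Fin p) (Fin q) ℝ), V₂ᵀ * (V₁ * M) = 0 := by
    intro q M; rw [← Matrix.mul_assoc, hV21, Matrix.zero_mul]
  have aV22 : ∀ {q : ℕ} (M : Matrix (Fin p₂) (Fin q) ℝ), V₂ᵀ * (V₂ * M) = M := by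
    intro q M; rw [← Matrix.mul_assoc, hV2, Matrix.one_mul]
  have aU21 : ∀ {q : ℕ} (M : Matrix (Fin p) (Fin q) ℝ), U₂ᵀ * (U₁ * M) = 0 := by
    intro q M; rw [← Matrix.mul_assoc, hU21, Matrix.zero_mul]
  have aU22 : ∀ {q : ℕ} (M : Matrix (Fin p₂) (Fin q) ℝ), U₂ᵀ * (U₂ * M) = M := by
    intro q M; rw [← Matrix.mul_assoc, hU2, Matrix.one_mul]
  have aQ1 : ∀ {q : ℕ} (M : Matrix (Fin p) (Fin q) ℝ), Q * (V₁ * M) = 0 := by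
    intro q M; rw [← Matrix.mul_assoc, hQV1, Matrix.zero_mul]
  have aQ2 : ∀ {q : ℕ} (M : Matrix (Fin p₂) (Fin q) ℝ), Q * (V₂ * M) = 0 := by
    intro q M; rw [← Matrix.mul_assoc, hQV2, Matrix.zero_mul]
  set X : Matrix (Fin p₂) (Fin p) ℝ := V₂ᵀ * Vh₁ with hXdef
  set Y : Matrix (Fin p₂) (Fin p) ℝ := U₂ᵀ * Uh₁ with hYdef
  set E : Matrix (Fin p₂) (Fin p) ℝ := V₂ᵀ * ((Bh - B)ᵀ * Uh₁) with hEdef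
  set F : Matrix (Fin p₂) (Fin p) ℝ := U₂ᵀ * ((B - Bh) * Vh₁) with hFdef
  set G : Matrix (Fin m) (Fin p) ℝ := Q * ((Bh - B)ᵀ * Uh₁) with hGdef
  set Z : Matrix (Fin m) (Fin p) ℝ := Q * Vh₁ with hZdef
  have eqE : X * diagonal σh₁ - diagonal σ₂ * Y = E := by
    rw [hEdef, hXdef, hYdef, hB, hBh]
    simp only [transpose_sub, transpose_add, transpose_mul, transpose_transpose,
      diagonal_transpose, Matrix.sub_mul, Matrix.add_mul, Matrix.mul_sub, Matrix.mul_add,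
      Matrix.mul_assoc, hUh1, hUh21, aV21, aV22, Matrix.mul_zero, Matrix.mul_one]
    abel
  have eqF : diagonal σ₂ * X - Y * diagonal σh₁ = F := by
    rw [hFdef, hXdef, hYdef, hB, hBh]
    simp only [Matrix.sub_mul, Matrix.add_mul, Matrix.mul_sub, Matrix.mul_add,
      Matrix.mul_assoc, hVh1, hVh21, aU21, aU22, Matrix.mul_zero, Matrix.mul_one]
    abel
  have eqG : Z * diagonal σh₁ = G := by
    rw [hGdef, hZdef, hB, hBh]
    simp only [transpose_sub, transpose_add, transpose_mul, transpose_transpose,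
      diagonal_transpose, Matrix.sub_mul, Matrix.add_mul, Matrix.mul_sub, Matrix.mul_add,
      Matrix.mul_assoc, hUh1, hUh21, aQ1, aQ2, Matrix.mul_zero, Matrix.mul_one,
      Matrix.zero_mul, sub_zero, zero_sub, neg_zero]
    abel
  -- entrywise bounds
  have hXbd : αb ^ 2 * fsq X ≤ fsq E + fsq F := by
    simp only [fsq, Finset.mul_sum, ← Finset.sum_add_distrib]
    refine Finset.sum_le_sum fun j _ => Finset.sum_le_sum fun i _ => ?_
    have h1 : X j i * σh₁ i - σ₂ j * Y j i = E j i := by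
      have := congrFun (congrFun eqE j) i
      simpa [Matrix.sub_apply, Matrix.mul_diagonal, Matrix.diagonal_mul] using this
    have h2 : σ₂ j * X j i - Y j i * σh₁ i = F j i := by
      have := congrFun (congrFun eqF j) i
      simpa [Matrix.sub_apply, Matrix.mul_diagonal, Matrix.diagonal_mul] using this
    exact scalar1 αb (σh₁ i) (σ₂ j) (X j i) (Y j i) (E j i) (F j i) hαb (hσ₂ j)
      (hsep i j) (hsep0 i) h1 h2
  have hZbd : αb ^ 2 * fsq Z ≤ fsq G := by
    simp only [fsq, Finset.mul_sum]
    refine Finset.sum_le_sum fun k _ => Finset.sum_le_sum fun i _ => ?_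
    have h1 : Z k i * σh₁ i = G k i := by
      have := congrFun (congrFun eqG k) i
      simpa [Matrix.mul_diagonal] using this
    exact scalar2 αb (σh₁ i) (Z k i) (G k i) hαb (hsep0 i) h1
  -- norm bounds on E, F, G
  set N : Matrix (Fin p) (Fin m) ℝ := Uh₁ᵀ * (Bh - B) with hNdef
  have hNE : fsq E = fsq (N * V₂) := by
    rw [← fsq_transpose E, hEdef, hNdef]
    congr 1
    simp [Matrix.mul_assoc]
  have hNG : fsq G = fsq (N * Q) := by
    rw [← fsq_transpose G, hGdef, hNdef]
    congr 1
    simp [hQs, Matrix.mul_assoc]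
  have hNle : fsq N ≤ fsq (Bh - B) := by
    rw [← fsq_transpose N, hNdef]
    have : (Uh₁ᵀ * (Bh - B))ᵀ = (Bh - B)ᵀ * Uh₁ := by simp
    rw [this]
    calc fsq ((Bh - B)ᵀ * Uh₁) ≤ fsq (Bh - B)ᵀ := fsq_mul_le _ _ hUh1
      _ = fsq (Bh - B) := fsq_transpose _
  have hEG : fsq E + fsq G ≤ fsq (Bh - B) := by
    have hd := fsq_decomp N V₁ V₂ hV1 hV2 hV12
    rw [← hQdef] at hd
    rw [hNE, hNG]
    linarith [fsq_nonneg (N * V₁)]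
  have hFle : fsq F ≤ fsq (Bh - B) := by
    rw [← fsq_transpose F, hFdef]
    have h1 : (U₂ᵀ * ((B - Bh) * Vh₁))ᵀ = ((B - Bh) * Vh₁)ᵀ * U₂ := by simp
    rw [h1]
    calc fsq (((B - Bh) * Vh₁)ᵀ * U₂) ≤ fsq ((B - Bh) * Vh₁)ᵀ := fsq_mul_le _ _ hU2
      _ = fsq ((B - Bh) * Vh₁) := fsq_transpose _
      _ ≤ fsq (B - Bh) := fsq_mul_le _ _ hVh1
      _ = fsq (Bh - B) := by rw [← neg_sub Bh B, fsq_neg]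
  -- trace identities
  have hp : fsq (Vh₁ᵀ) = (p : ℝ) := by
    rw [fsq_transpose, fsq_eq_trace, hVh1, trace_one]
    simp
  have hdecV := fsq_decomp Vh₁ᵀ V₁ V₂ hV1 hV2 hV12
  rw [← hQdef] at hdecV
  have hXt : fsq (Vh₁ᵀ * V₂) = fsq X := by
    rw [← fsq_transpose (Vh₁ᵀ * V₂), hXdef]
    congr 1
    simp
  have hZt : fsq (Vh₁ᵀ * Q) = fsq Z := by
    rw [← fsq_transpose (Vh₁ᵀ * Q), hZdef]
    congr 1
    simp [hQs]
  have t11 : trace ((V₁ * V₁ᵀ) * (V₁ * V₁ᵀ)) = (p : ℝ) := by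
    rw [Matrix.mul_assoc, ← Matrix.mul_assoc V₁ᵀ, hV1, Matrix.one_mul,
      trace_mul_comm, hV1, trace_one]
    simp
  have t22 : trace ((Vh₁ * Vh₁ᵀ) * (Vh₁ * Vh₁ᵀ)) = (p : ℝ) := by
    rw [Matrix.mul_assoc, ← Matrix.mul_assoc Vh₁ᵀ, hVh1, Matrix.one_mul,
      trace_mul_comm, hVh1, trace_one]
    simp
  have t12 : trace ((V₁ * V₁ᵀ) * (Vh₁ * Vh₁ᵀ)) = fsq (Vh₁ᵀ * V₁) := by
    have h1 : (V₁ * V₁ᵀ) * (Vh₁ * Vh₁ᵀ) = V₁ * (V₁ᵀ * Vh₁ * Vh₁ᵀ) := by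
      simp [Matrix.mul_assoc]
    rw [h1, trace_mul_comm, fsq_eq_trace, transpose_mul, transpose_transpose]
    congr 1
    simp [Matrix.mul_assoc]
  have t21 : trace ((Vh₁ * Vh₁ᵀ) * (V₁ * V₁ᵀ)) = fsq (Vh₁ᵀ * V₁) := by
    rw [trace_mul_comm]; exact t12
  have hmain : fsq (V₁ * V₁ᵀ - Vh₁ * Vh₁ᵀ) = 2 * (p : ℝ) - 2 * fsq (Vh₁ᵀ * V₁) := by
    rw [fsq_eq_trace, transpose_sub, transpose_mul, transpose_transpose,
      transpose_mul, transpose_transpose, Matrix.sub_mul, Matrix.mul_sub, Matrix.mul_sub,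
      trace_sub, trace_sub, trace_sub, t11, t22, t12, t21]
    ring
  have hsplit : fsq (V₁ * V₁ᵀ - Vh₁ * Vh₁ᵀ) = 2 * fsq X + 2 * fsq Z := by
    rw [hmain]
    linarith [hdecV, hp, hXt, hZt]
  have hkey : αb ^ 2 * fsq (V₁ * V₁ᵀ - Vh₁ * Vh₁ᵀ) ≤ 4 * fsq (Bh - B) := by
    rw [hsplit, show αb ^ 2 * (2 * fsq X + 2 * fsq Z)
      = 2 * (αb ^ 2 * fsq X) + 2 * (αb ^ 2 * fsq Z) from by ring]
    linarith
  -- conclude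
  have hRn : fsq (Bh - B) = fsq (B - Bh) := by rw [← neg_sub B Bh, fsq_neg]
  have frobNorm_eq : ∀ {k l : ℕ} (M : Matrix (Fin k) (Fin l) ℝ),
      frobNorm M = Real.sqrt (fsq M) := fun M => rfl
  rw [frobNorm_eq, frobNorm_eq]
  have hα2 : (0:ℝ) < αb ^ 2 := by positivity
  have h2 : fsq (V₁ * V₁ᵀ - Vh₁ * Vh₁ᵀ) ≤ (2 / αb) ^ 2 * fsq (B - Bh) := by
    rw [show (2 / αb) ^ 2 * fsq (B - Bh) = 4 * fsq (Bh - B) / αb ^ 2 by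
      rw [hRn]; ring]
    exact (le_div_iff₀ hα2).mpr (by linarith [hkey])
  calc Real.sqrt (fsq (V₁ * V₁ᵀ - Vh₁ * Vh₁ᵀ))
      ≤ Real.sqrt ((2 / αb) ^ 2 * fsq (B - Bh)) := Real.sqrt_le_sqrt h2
    _ = 2 / αb * Real.sqrt (fsq (B - Bh)) := by
        rw [Real.sqrt_mul (by positivity), Real.sqrt_sq (by positivity)]
end

section
/- Fix k ≥ 1 and M, N ∈ ℕ with M + 1 ≤ N − 1, and let g₀ : [0,1] → ℝ be continuously differentiable with ‖g₀'‖_∞ < ∞, N-times continuously differentiable in a neighborhood of 0, with g₀^{(ℓ)}(0) = 0 for all ℓ = 1, …, M. Define α(k,d) := (2Γ(d/2)/(k·Γ((d−k)/2)·Γ(k/2))) · ∫₀¹ g₀'(r)²·(1−r²)^{(d−2−k)/2}·r^{k−1} dr. Then, with k fixed, α(k,d) = O(d^{−M}) as d → ∞; i.e., there exist C > 0 and d₀ such that α(k,d) ≤ C·d^{−M} for all d ≥ d₀. -/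
open MeasureTheory Set

private lemma real_beta19 {a b : ℝ} (ha : 0 < a) (hb : 0 < b) :
    ∫ x in (0:ℝ)..1, x ^ (a - 1) * (1 - x) ^ (b - 1) =
      Real.Gamma a * Real.Gamma b / Real.Gamma (a + b) := by
  have key := Complex.Gamma_mul_Gamma_eq_betaIntegral (s := (a:ℂ)) (t := (b:ℂ))
    (by simpa using ha) (by simpa using hb)
  have hint : Complex.betaIntegral (a:ℂ) (b:ℂ) =
      ((∫ x in (0:ℝ)..1, x ^ (a - 1) * (1 - x) ^ (b - 1) : ℝ) : ℂ) := by
    rw [Complex.betaIntegral, ← intervalIntegral.integral_ofReal]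
    refine intervalIntegral.integral_congr fun x hx => ?_
    rw [Set.uIcc_of_le (by norm_num : (0:ℝ) ≤ 1)] at hx
    have hx0 : (0:ℝ) ≤ x := hx.1
    have hx1 : (0:ℝ) ≤ 1 - x := by linarith [hx.2]
    rw [show ((a:ℂ) - 1) = ((a - 1 : ℝ) : ℂ) by push_cast; ring,
      show ((b:ℂ) - 1) = ((b - 1 : ℝ) : ℂ) by push_cast; ring,
      show ((1:ℂ) - (x:ℂ)) = ((1 - x : ℝ) : ℂ) by push_cast; ring,
      ← Complex.ofReal_cpow hx0, ← Complex.ofReal_cpow hx1, ← Complex.ofReal_mul]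
  rw [hint, ← Complex.ofReal_add, Complex.Gamma_ofReal, Complex.Gamma_ofReal,
    Complex.Gamma_ofReal, ← Complex.ofReal_mul, ← Complex.ofReal_mul] at key
  have := Complex.ofReal_injective key
  have hG : Real.Gamma (a + b) ≠ 0 := (Real.Gamma_pos_of_pos (by linarith)).ne'
  field_simp
  linarith [this]

private lemma gamma_ratio19 {x : ℝ} (hx : 0 < x) (M : ℕ) :
    Real.Gamma x * x ^ M ≤ Real.Gamma (x + M) := by
  induction M with
  | zero => simp
  | succ m ih =>
    have hxm : (0:ℝ) < x + m := by positivity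
    have hG := Real.Gamma_pos_of_pos hx
    have h2 : Real.Gamma (x + (m+1 : ℕ)) = (x + m) * Real.Gamma (x + m) := by
      push_cast
      rw [show (x + ((m:ℝ)+1)) = (x + m) + 1 by ring, Real.Gamma_add_one hxm.ne']
    rw [h2]
    calc Real.Gamma x * x ^ (m+1) = x * (Real.Gamma x * x ^ m) := by ring
    _ ≤ (x + m) * (Real.Gamma x * x ^ m) :=
        mul_le_mul_of_nonneg_right (le_add_of_nonneg_right (Nat.cast_nonneg m)) (by positivity)
    _ ≤ (x + m) * Real.Gamma (x + m) := by nlinarith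

private lemma sq_image19 : (fun r : ℝ => r ^ 2) '' Ioo 0 1 = Ioo 0 1 := by
  ext x
  constructor
  · rintro ⟨r, ⟨h1, h2⟩, rfl⟩
    refine ⟨by positivity, ?_⟩
    simp only
    nlinarith
  · rintro ⟨h1, h2⟩
    exact ⟨Real.sqrt x, ⟨Real.sqrt_pos.2 h1, by
      rw [show (1:ℝ) = Real.sqrt 1 by simp]
      exact Real.sqrt_lt_sqrt h1.le h2⟩, Real.sq_sqrt h1.le⟩

private lemma subst_sq19 (F : ℝ → ℝ) :
    ∫ x in Ioo (0:ℝ) 1, F x = ∫ r in Ioo (0:ℝ) 1, |2 * r| * F (r ^ 2) := by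
  conv_lhs => rw [← sq_image19]
  refine MeasureTheory.integral_image_eq_integral_abs_deriv_smul (f' := fun x => 2 * x)
    measurableSet_Ioo (fun x _ => ?_) (fun a ha b hb h => ?_) F
  · have : HasDerivAt (fun r : ℝ => r ^ 2) (2 * x) x := by simpa using hasDerivAt_pow 2 x
    exact this.hasDerivWithinAt
  · nlinarith [ha.1, hb.1, ha.2, hb.2]

private lemma key_integral19 {e c : ℝ} (he : 0 < e) (hc : 0 < c + 1) (p : ℕ)
    (hp : (p:ℝ) = 2*c + 1) :
    ∫ r in (0:ℝ)..1, (1 - r^2) ^ e * r ^ p =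
      1/2 * (Real.Gamma (c+1) * Real.Gamma (e+1) / Real.Gamma (c+1+(e+1))) := by
  have hbeta := real_beta19 hc (by linarith : (0:ℝ) < e + 1)
  simp only [add_sub_cancel_right] at hbeta
  have h1 : ∫ x in (0:ℝ)..1, x ^ c * (1 - x) ^ e = ∫ x in Ioo (0:ℝ) 1, x ^ c * (1 - x) ^ e := by
    rw [intervalIntegral.integral_of_le (by norm_num : (0:ℝ) ≤ 1),
      MeasureTheory.integral_Ioc_eq_integral_Ioo]
  have h2 := subst_sq19 (fun x => x ^ c * (1 - x) ^ e)
  have h3 : ∫ r in Ioo (0:ℝ) 1, |2 * r| * ((r^2) ^ c * (1 - r^2) ^ e) =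
      ∫ r in Ioo (0:ℝ) 1, 2 * ((1 - r^2) ^ e * r ^ p) := by
    refine MeasureTheory.setIntegral_congr_fun measurableSet_Ioo fun r hr => ?_
    obtain ⟨hr0, hr1⟩ := hr
    have habs : |2 * r| = 2 * r := abs_of_pos (by linarith)
    have hrc : ((r^2 : ℝ) ^ c) * r = r ^ p := by
      calc ((r^2 : ℝ) ^ c) * r = (r ^ ((2:ℕ):ℝ)) ^ c * r ^ (1:ℝ) :=
            by rw [Real.rpow_natCast, Real.rpow_one]
      _ = r ^ ((2:ℝ)*c) * r ^ (1:ℝ) := by rw [← Real.rpow_mul hr0.le]; norm_num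
      _ = r ^ ((2:ℝ)*c + 1) := by rw [← Real.rpow_add hr0]
      _ = r ^ ((p:ℕ):ℝ) := by rw [hp]
      _ = r ^ p := Real.rpow_natCast r p
    rw [habs]
    calc 2 * r * ((r^2) ^ c * (1 - r^2) ^ e) = 2 * ((1 - r^2) ^ e * ((r^2) ^ c * r)) := by ring
    _ = 2 * ((1 - r^2) ^ e * r ^ p) := by rw [hrc]
  have h4 : ∫ r in Ioo (0:ℝ) 1, 2 * ((1 - r^2) ^ e * r ^ p) =
      2 * ∫ r in Ioo (0:ℝ) 1, (1 - r^2) ^ e * r ^ p := MeasureTheory.integral_const_mul 2 _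
  have h5 : ∫ r in (0:ℝ)..1, (1 - r^2) ^ e * r ^ p
      = ∫ r in Ioo (0:ℝ) 1, (1 - r^2) ^ e * r ^ p := by
    rw [intervalIntegral.integral_of_le (by norm_num : (0:ℝ) ≤ 1),
      MeasureTheory.integral_Ioc_eq_integral_Ioo]
  rw [h5]
  have : (2:ℝ) * ∫ r in Ioo (0:ℝ) 1, (1 - r^2) ^ e * r ^ p
      = Real.Gamma (c+1) * Real.Gamma (e+1) / Real.Gamma (c+1+(e+1)) := by
    rw [← h4, ← h3, ← h2, ← h1, hbeta]
  linarith

private lemma idw_eq19 {f : ℝ → ℝ} {U : Set ℝ} (hU : IsOpen U) {a b : ℝ} (hab : a < b)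
    (hsub : Icc a b ⊆ U) {n m : ℕ} (hf : ContDiffOn ℝ m f U) (hnm : n ≤ m)
    {y : ℝ} (hy : y ∈ Icc a b) :
    iteratedDerivWithin n f (Icc a b) y = iteratedDeriv n f y := by
  have h1 : HasFTaylorSeriesUpToOn m f (ftaylorSeriesWithin ℝ f U) U :=
    hf.ftaylorSeriesWithin hU.uniqueDiffOn
  have h2 := (h1.mono hsub).eq_iteratedFDerivWithin_of_uniqueDiffOn
    (by exact_mod_cast hnm) (uniqueDiffOn_Icc hab) hy
  have h3 : ftaylorSeriesWithin ℝ f U y n = iteratedFDerivWithin ℝ n f U y := rfl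
  have h4 : iteratedFDerivWithin ℝ n f U y = iteratedFDeriv ℝ n f y :=
    iteratedFDerivWithin_of_isOpen n hU (hsub hy)
  rw [iteratedDerivWithin_eq_iteratedFDerivWithin, iteratedDeriv_eq_iteratedFDeriv,
    ← h2, h3, h4]

private lemma taylor_bound19 {f : ℝ → ℝ} {U : Set ℝ} (hU : IsOpen U) {δ : ℝ}
    (hsub : Icc 0 δ ⊆ U) (m : ℕ) (hf : ContDiffOn ℝ (m+1) f U)
    (hvan : ∀ j, j < m → iteratedDeriv j f 0 = 0) :
    ∃ C ≥ (0:ℝ), ∀ r ∈ Icc (0:ℝ) δ, |f r| ≤ C * r ^ m := by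
  have hcontm : ContinuousOn (iteratedDeriv m f) (Icc 0 δ) := by
    have h := hf.continuousOn_iteratedDerivWithin
      (m := m) (by exact_mod_cast Nat.le_succ m) hU.uniqueDiffOn
    refine (h.mono hsub).congr fun y hy => ?_
    rw [iteratedDerivWithin_eq_iteratedFDerivWithin, iteratedDeriv_eq_iteratedFDeriv,
      iteratedFDerivWithin_of_isOpen m hU (hsub hy)]
  obtain ⟨K, hK⟩ := (isCompact_Icc).exists_bound_of_continuousOn hcontm
  refine ⟨max K 0, le_max_right _ _, fun r hr => ?_⟩
  match m with
  | 0 =>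
    have h := hK r hr
    rw [iteratedDeriv_zero] at h
    simpa using h.trans (le_max_left K 0)
  | (n+1) =>
    rcases eq_or_lt_of_le hr.1 with h0 | h0
    · have : f 0 = 0 := hvan 0 (Nat.succ_pos n)
      rw [← h0, this]
      simp
    · have hsub' : Icc (0:ℝ) r ⊆ U := fun y hy => hsub ⟨hy.1, le_trans hy.2 hr.2⟩
      have hfr : ContDiffOn ℝ n f (Icc 0 r) :=
        (hf.of_le (by exact_mod_cast Nat.le_succ_of_le (Nat.le_succ n))).mono hsub'
      have hdiff : DifferentiableOn ℝ (iteratedDerivWithin n f (Icc 0 r)) (Ioo 0 r) := by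
        have := (hf.mono hsub').differentiableOn_iteratedDerivWithin
          (m := n) (by exact_mod_cast Nat.lt_succ_of_lt (Nat.lt_succ_self n))
          (uniqueDiffOn_Icc h0)
        exact this.mono Ioo_subset_Icc_self
      obtain ⟨x', hx', hx'eq⟩ := taylor_mean_remainder_lagrange h0.ne
          (by rwa [uIcc_of_le h0.le]) (by rwa [uIcc_of_le h0.le, uIoo_of_le h0.le])
      rw [uIcc_of_le h0.le] at hx'eq
      rw [uIoo_of_le h0.le] at hx'
      have htay : taylorWithinEval f n (Icc 0 r) 0 r = 0 := by
        rw [taylor_within_apply]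
        refine Finset.sum_eq_zero fun j hj => ?_
        have hj' : j < n + 1 := Finset.mem_range.1 hj
        have : iteratedDerivWithin j f (Icc 0 r) 0 = 0 := by
          rw [idw_eq19 hU h0 hsub' hf
            (le_trans (Nat.le_of_lt_succ hj') (Nat.le_succ_of_le (Nat.le_succ n)))
            (left_mem_Icc.2 h0.le)]
          exact hvan j hj'
        rw [this, smul_zero]
      rw [htay, sub_zero] at hx'eq
      have hIDW : iteratedDerivWithin (n+1) f (Icc 0 r) x' = iteratedDeriv (n+1) f x' :=
        idw_eq19 hU h0 hsub' hf (Nat.le_succ _) (Ioo_subset_Icc_self hx')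
      have hx'K : |iteratedDeriv (n+1) f x'| ≤ max K 0 := by
        refine le_trans ?_ (le_max_left K 0)
        exact hK x' ⟨hx'.1.le, le_trans hx'.2.le hr.2⟩
      rw [hx'eq, hIDW]
      have hfac : (1:ℝ) ≤ ((n+1).factorial : ℝ) := by
        exact_mod_cast (n+1).factorial_pos
      have hr0 : (0:ℝ) ≤ r := hr.1
      rw [sub_zero, abs_div, abs_mul, abs_pow, abs_of_nonneg hr0, Nat.abs_cast]
      have hd : |iteratedDeriv (n+1) f x'| * r ^ (n+1) / (((n+1).factorial : ℕ) : ℝ)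
          ≤ |iteratedDeriv (n+1) f x'| * r ^ (n+1) :=
        div_le_self (by positivity) hfac
      have hm := mul_le_mul_of_nonneg_right hx'K (pow_nonneg hr0 (n+1))
      linarith

private lemma global_bound19
    (M N : ℕ) (hMN : M + 1 ≤ N - 1)
    (g₀ g₀' : ℝ → ℝ) (C₂ : ℝ)
    (hg₀ : ∀ r ∈ Set.Icc (0 : ℝ) 1, HasDerivWithinAt g₀ (g₀' r) (Set.Icc (0 : ℝ) 1) r)
    (hbound : ∀ r ∈ Set.Icc (0 : ℝ) 1, |g₀' r| ≤ C₂)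
    (U : Set ℝ) (hU : IsOpen U) (h0U : (0 : ℝ) ∈ U)
    (hsmooth : ContDiffOn ℝ N g₀ U)
    (hvanish : ∀ ℓ : ℕ, 1 ≤ ℓ → ℓ ≤ M → iteratedDeriv ℓ g₀ 0 = 0) :
    ∃ Cg > (0:ℝ), ∀ r ∈ Set.Icc (0:ℝ) 1, |g₀' r| ≤ Cg * r ^ M := by
  have hN : M + 2 ≤ N := by omega
  have hf2 : ContDiffOn ℝ ((M+1)+1) g₀ U := hsmooth.of_le (by exact_mod_cast hN)
  have hF : ContDiffOn ℝ (M+1) (deriv g₀) U := by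
    refine hf2.deriv_of_isOpen hU ?_
    exact_mod_cast le_refl (M+2)
  -- choose δ
  obtain ⟨ε, hε, hball⟩ := Metric.isOpen_iff.1 hU 0 h0U
  set δ : ℝ := min (ε/2) 1 with hδdef
  have hδpos : 0 < δ := lt_min (by linarith) one_pos
  have hδ1 : δ ≤ 1 := min_le_right _ _
  have hsubU : Icc (0:ℝ) δ ⊆ U := by
    intro y hy
    apply hball
    rw [Metric.mem_ball, Real.dist_eq, sub_zero, abs_of_nonneg hy.1]
    calc y ≤ δ := hy.2
    _ ≤ ε/2 := min_le_left _ _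
    _ < ε := by linarith
  have hvanF : ∀ j, j < M → iteratedDeriv j (deriv g₀) 0 = 0 := by
    intro j hj
    rw [← iteratedDeriv_succ']
    exact hvanish (j+1) (Nat.succ_le_succ (Nat.zero_le j)) hj
  obtain ⟨C₁, hC₁0, hC₁⟩ := taylor_bound19 hU hsubU M hF hvanF
  -- g₀' = deriv g₀ on Icc 0 δ
  have heq : ∀ r ∈ Icc (0:ℝ) δ, g₀' r = deriv g₀ r := by
    intro r hr
    have hr1 : r ∈ Icc (0:ℝ) 1 := ⟨hr.1, le_trans hr.2 hδ1⟩
    have hdiff : DifferentiableAt ℝ g₀ r := by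
      have := (hf2.differentiableOn (by simp)) r
        (hsubU hr)
      exact this.differentiableAt (hU.mem_nhds (hsubU hr))
    have hud : UniqueDiffWithinAt ℝ (Icc (0:ℝ) 1) r := uniqueDiffOn_Icc one_pos r hr1
    have h1 := (hg₀ r hr1).derivWithin hud
    have h2 := (hdiff.hasDerivAt.hasDerivWithinAt (s := Icc (0:ℝ) 1)).derivWithin hud
    rw [← h1, ← h2]
  have hC₂0 : 0 ≤ C₂ :=
    le_trans (abs_nonneg _) (hbound 0 ⟨le_refl 0, zero_le_one⟩)
  refine ⟨max C₁ (C₂ / δ ^ M) + 1, by positivity, fun r hr => ?_⟩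
  have hr0 : (0:ℝ) ≤ r := hr.1
  by_cases hrδ : r ≤ δ
  · have hrIcc : r ∈ Icc (0:ℝ) δ := ⟨hr0, hrδ⟩
    rw [heq r hrIcc]
    refine le_trans (hC₁ r hrIcc) ?_
    have : C₁ ≤ max C₁ (C₂ / δ ^ M) + 1 := by
      have := le_max_left C₁ (C₂ / δ ^ M); linarith
    exact mul_le_mul_of_nonneg_right this (by positivity)
  · push_neg at hrδ
    refine le_trans (hbound r hr) ?_
    have hδM : δ ^ M ≤ r ^ M := pow_le_pow_left₀ hδpos.le hrδ.le M
    have h1 : C₂ ≤ (C₂ / δ ^ M) * r ^ M := by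
      rw [div_mul_eq_mul_div, le_div_iff₀ (by positivity)]
      exact mul_le_mul_of_nonneg_left hδM hC₂0
    refine le_trans h1 ?_
    have : C₂ / δ ^ M ≤ max C₁ (C₂ / δ ^ M) + 1 := by
      have := le_max_right C₁ (C₂ / δ ^ M); linarith
    exact mul_le_mul_of_nonneg_right this (by positivity)

set_option maxHeartbeats 1000000 in
/-- Fix `k ≥ 1` and `M + 1 ≤ N - 1`.  If `g₀ ∈ C¹([0,1])` with bounded
derivative is `N`-times continuously differentiable near `0` and `g₀^{(ℓ)}(0) = 0` for
`ℓ = 1, …, M`, then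
`α(k,d) := (2Γ(d/2)/(k Γ((d-k)/2) Γ(k/2))) ∫₀¹ g₀'(r)² (1-r²)^{(d-2-k)/2} r^{k-1} dr`
satisfies `α(k,d) = O(d^{-M})` as `d → ∞` (with `k` fixed). -/
theorem statement19
    (k : ℕ) (hk : 1 ≤ k) (M N : ℕ) (hMN : M + 1 ≤ N - 1)
    (g₀ g₀' : ℝ → ℝ) (C₂ : ℝ)
    (hg₀ : ∀ r ∈ Set.Icc (0 : ℝ) 1, HasDerivWithinAt g₀ (g₀' r) (Set.Icc (0 : ℝ) 1) r)
    (hcont : ContinuousOn g₀' (Set.Icc (0 : ℝ) 1))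
    (hbound : ∀ r ∈ Set.Icc (0 : ℝ) 1, |g₀' r| ≤ C₂)
    (U : Set ℝ) (hU : IsOpen U) (h0U : (0 : ℝ) ∈ U)
    (hsmooth : ContDiffOn ℝ N g₀ U)
    (hvanish : ∀ ℓ : ℕ, 1 ≤ ℓ → ℓ ≤ M → iteratedDeriv ℓ g₀ 0 = 0) :
    ∃ C > (0 : ℝ), ∃ d₀ : ℕ, ∀ d : ℕ, d₀ ≤ d →
      2 * Real.Gamma ((d : ℝ) / 2) /
          (k * Real.Gamma (((d : ℝ) - k) / 2) * Real.Gamma ((k : ℝ) / 2)) *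
          ∫ r in (0 : ℝ)..1, (g₀' r) ^ 2 * (1 - r ^ 2) ^ (((d : ℝ) - 2 - k) / 2) *
            r ^ (k - 1) ≤
        C * (d : ℝ) ^ (-(M : ℝ)) := by
  obtain ⟨Cg, hCg, hgb⟩ := global_bound19 M N hMN g₀ g₀' C₂ hg₀ hbound U hU h0U hsmooth hvanish
  have hkR : (1:ℝ) ≤ (k:ℝ) := by exact_mod_cast hk
  have hGk : 0 < Real.Gamma ((k:ℝ)/2) := Real.Gamma_pos_of_pos (by linarith)
  have hGMk : 0 < Real.Gamma ((M:ℝ) + (k:ℝ)/2) :=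
    Real.Gamma_pos_of_pos (by positivity)
  set C : ℝ := Cg ^ 2 * Real.Gamma ((M:ℝ) + (k:ℝ)/2) * 2 ^ M / (k * Real.Gamma ((k:ℝ)/2))
    with hCdef
  have hCpos : 0 < C := by
    have hk0 : (0:ℝ) < k := by linarith
    positivity
  refine ⟨C, hCpos, k + 3, fun d hd => ?_⟩
  have hdR : (k:ℝ) + 3 ≤ (d:ℝ) := by exact_mod_cast hd
  have hd0 : (0:ℝ) < d := by linarith
  set e : ℝ := ((d:ℝ) - 2 - k) / 2 with hedef
  have he : 0 < e := by rw [hedef]; linarith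
  -- positivity of the Gamma prefactor
  have hGd : 0 < Real.Gamma ((d:ℝ)/2) := Real.Gamma_pos_of_pos (by linarith)
  have hGdk : 0 < Real.Gamma (((d:ℝ) - k)/2) := Real.Gamma_pos_of_pos (by linarith)
  have hGMd : 0 < Real.Gamma ((M:ℝ) + (d:ℝ)/2) := Real.Gamma_pos_of_pos (by positivity)
  have hGpre : 0 ≤ 2 * Real.Gamma ((d : ℝ) / 2) /
      (k * Real.Gamma (((d : ℝ) - k) / 2) * Real.Gamma ((k : ℝ) / 2)) := by
    have hk0 : (0:ℝ) < k := by linarith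
    positivity
  -- continuity facts
  have hrpow : Continuous fun r : ℝ => (1 - r ^ 2) ^ e :=
    (Real.continuous_rpow_const he.le).comp (by continuity)
  have hcont1 : ContinuousOn
      (fun r : ℝ => (g₀' r) ^ 2 * (1 - r ^ 2) ^ e * r ^ (k - 1)) (Icc 0 1) :=
    (((hcont.pow 2).mul hrpow.continuousOn).mul (continuousOn_pow _))
  have hcont2 : ContinuousOn
      (fun r : ℝ => (Cg * r ^ M) ^ 2 * (1 - r ^ 2) ^ e * r ^ (k - 1)) (Icc 0 1) := by
    apply ContinuousOn.mul _ (continuousOn_pow _)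
    exact ContinuousOn.mul (by fun_prop) hrpow.continuousOn
  have huIcc : uIcc (0:ℝ) 1 = Icc 0 1 := uIcc_of_le zero_le_one
  -- integral monotonicity
  have hmono : (∫ r in (0 : ℝ)..1, (g₀' r) ^ 2 * (1 - r ^ 2) ^ e * r ^ (k - 1)) ≤
      ∫ r in (0 : ℝ)..1, (Cg * r ^ M) ^ 2 * (1 - r ^ 2) ^ e * r ^ (k - 1) := by
    refine intervalIntegral.integral_mono_on zero_le_one
      (ContinuousOn.intervalIntegrable (by rw [huIcc]; exact hcont1))
      (ContinuousOn.intervalIntegrable (by rw [huIcc]; exact hcont2)) fun r hr => ?_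
    have h1 : (g₀' r) ^ 2 ≤ (Cg * r ^ M) ^ 2 := by
      rw [← sq_abs (g₀' r)]
      exact pow_le_pow_left₀ (abs_nonneg _) (hgb r hr) 2
    have h2 : (0:ℝ) ≤ (1 - r ^ 2) ^ e := Real.rpow_nonneg (by nlinarith [hr.1, hr.2]) e
    have h3 : (0:ℝ) ≤ r ^ (k - 1) := pow_nonneg hr.1 _
    exact mul_le_mul_of_nonneg_right (mul_le_mul_of_nonneg_right h1 h2) h3
  -- compute the majorant integral
  set c : ℝ := (M:ℝ) + (k:ℝ)/2 - 1 with hcdef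
  have hc1 : c + 1 = (M:ℝ) + (k:ℝ)/2 := by rw [hcdef]; ring
  have hcpos : 0 < c + 1 := by rw [hc1]; positivity
  set p : ℕ := 2 * M + (k - 1) with hpdef
  have hpR : (p:ℝ) = 2 * c + 1 := by
    rw [hpdef, hcdef]
    push_cast [Nat.cast_sub hk]
    ring
  have hkey := key_integral19 he hcpos p hpR
  have hcongr : (∫ r in (0 : ℝ)..1, (Cg * r ^ M) ^ 2 * (1 - r ^ 2) ^ e * r ^ (k - 1)) =
      Cg ^ 2 * ∫ r in (0 : ℝ)..1, (1 - r ^ 2) ^ e * r ^ p := by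
    rw [← intervalIntegral.integral_const_mul]
    refine intervalIntegral.integral_congr fun r hr => ?_
    rw [hpdef, pow_add, pow_mul]
    ring
  -- assemble
  have harg1 : c + 1 + (e + 1) = (M:ℝ) + (d:ℝ)/2 := by
    rw [hcdef, hedef]; ring
  have harg2 : e + 1 = ((d:ℝ) - k)/2 := by rw [hedef]; ring
  rw [harg1, harg2, hc1] at hkey
  have hstep : 2 * Real.Gamma ((d : ℝ) / 2) /
      (k * Real.Gamma (((d : ℝ) - k) / 2) * Real.Gamma ((k : ℝ) / 2)) *
      (∫ r in (0 : ℝ)..1, (g₀' r) ^ 2 * (1 - r ^ 2) ^ e * r ^ (k - 1)) ≤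
      2 * Real.Gamma ((d : ℝ) / 2) /
      (k * Real.Gamma (((d : ℝ) - k) / 2) * Real.Gamma ((k : ℝ) / 2)) *
      (Cg ^ 2 * (1/2 * (Real.Gamma ((M:ℝ) + (k:ℝ)/2) * Real.Gamma (((d:ℝ) - k)/2) /
        Real.Gamma ((M:ℝ) + (d:ℝ)/2)))) := by
    rw [← hkey, ← hcongr]
    exact mul_le_mul_of_nonneg_left hmono hGpre
  refine le_trans hstep ?_
  -- simplify the product of Gammas
  have hk0 : (0:ℝ) < k := by linarith
  have hsimp : 2 * Real.Gamma ((d : ℝ) / 2) /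
      (k * Real.Gamma (((d : ℝ) - k) / 2) * Real.Gamma ((k : ℝ) / 2)) *
      (Cg ^ 2 * (1/2 * (Real.Gamma ((M:ℝ) + (k:ℝ)/2) * Real.Gamma (((d:ℝ) - k)/2) /
        Real.Gamma ((M:ℝ) + (d:ℝ)/2)))) =
      (Cg ^ 2 * Real.Gamma ((M:ℝ) + (k:ℝ)/2) / (k * Real.Gamma ((k:ℝ)/2))) *
        (Real.Gamma ((d:ℝ)/2) / Real.Gamma ((M:ℝ) + (d:ℝ)/2)) := by
    field_simp
  rw [hsimp]
  -- Gamma ratio bound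
  have hratio : Real.Gamma ((d:ℝ)/2) / Real.Gamma ((M:ℝ) + (d:ℝ)/2) ≤
      2 ^ M * ((d:ℝ)) ^ (-(M:ℝ)) := by
    have h := gamma_ratio19 (show (0:ℝ) < (d:ℝ)/2 by positivity) M
    rw [show (d:ℝ)/2 + (M:ℝ) = (M:ℝ) + (d:ℝ)/2 from by ring] at h
    rw [Real.rpow_neg hd0.le, Real.rpow_natCast, div_le_iff₀ hGMd]
    calc Real.Gamma ((d:ℝ)/2)
        = (Real.Gamma ((d:ℝ)/2) * ((d:ℝ)/2) ^ M) * (2 ^ M * ((d:ℝ) ^ M)⁻¹) := by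
          rw [div_pow]
          field_simp
    _ ≤ Real.Gamma ((M:ℝ) + (d:ℝ)/2) * (2 ^ M * ((d:ℝ) ^ M)⁻¹) := by
          refine mul_le_mul_of_nonneg_right h (by positivity)
    _ = 2 ^ M * ((d:ℝ) ^ M)⁻¹ * Real.Gamma ((M:ℝ) + (d:ℝ)/2) := by ring
  have hA : (0:ℝ) ≤ Cg ^ 2 * Real.Gamma ((M:ℝ) + (k:ℝ)/2) / (k * Real.Gamma ((k:ℝ)/2)) := by
    positivity
  refine le_trans (mul_le_mul_of_nonneg_left hratio hA) (le_of_eq ?_)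
  rw [hCdef]
  ring
end
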